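/- arXiv:0709.1235 — 7 statements merged into one kernel-verified Lean document; each statement's English description precedes it below -/
import Mathlib

section
/- Let 0 < α ≤ ∞ and let f be a real function on (-α,α). If f[A] ≥ f[B] holds for all symmetric 2×2 real matrices A, B with entries in (-α,α) satisfying A ≥ B (with no positivity assumption on B), then f is affine on (-α,α), i.e., there exist real constants c, d with f(x) = cx + d for all x ∈ (-α,α). -/
open Matrix

/-- `x` lies in the open interval `(-a, a)`, where `a ∈ (0, ∞]` is an extended real. -/
def MemI (a : EReal) (x : ℝ) : Prop := -a < (x : EReal) ∧ (x : EReal) < a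

/-- `x` lies in the open interval `(0, a)`. -/
def MemP (a : EReal) (x : ℝ) : Prop := 0 < x ∧ (x : EReal) < a

/-- All entries of the matrix `A` lie in `(-a, a)`. -/
def EntriesIn (a : EReal) {n : ℕ} (A : Matrix (Fin n) (Fin n) ℝ) : Prop :=
  ∀ i j, MemI a (A i j)

/-- `f` is S-positive (Schur positive) of order `n` on `(-a, a)`. -/
def SPos (a : EReal) (f : ℝ → ℝ) (n : ℕ) : Prop :=
  ∀ A : Matrix (Fin n) (Fin n) ℝ, EntriesIn a A → A.PosSemidef → (A.map f).PosSemidef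

/-- `f` is S-monotone (Schur monotone) of order `n` on `(-a, a)`. -/
def SMono (a : EReal) (f : ℝ → ℝ) (n : ℕ) : Prop :=
  ∀ A B : Matrix (Fin n) (Fin n) ℝ, A.IsSymm → B.IsSymm →
    EntriesIn a A → EntriesIn a B →
    B.PosSemidef → (A - B).PosSemidef →
    (A.map f - B.map f).PosSemidef

/-- `f` is S-convex (Schur convex) of order `n` on `(-a, a)`. -/
def SConv (a : EReal) (f : ℝ → ℝ) (n : ℕ) : Prop :=
  ∀ A B : Matrix (Fin n) (Fin n) ℝ, A.IsSymm → B.IsSymm →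
    EntriesIn a A → EntriesIn a B →
    B.PosSemidef → (A - B).PosSemidef →
    ∀ t : ℝ, 0 ≤ t → t ≤ 1 →
    (t • A.map f + (1 - t) • B.map f - (t • A + (1 - t) • B).map f).PosSemidef

namespace Stmt0Aux

lemma memI_conv {a : EReal} {x y z : ℝ} (hx : MemI a x) (hy : MemI a y)
    (h1 : x ≤ z) (h2 : z ≤ y) : MemI a z :=
  ⟨lt_of_lt_of_le hx.1 (EReal.coe_le_coe_iff.2 h1),
   lt_of_le_of_lt (EReal.coe_le_coe_iff.2 h2) hy.2⟩

lemma memI_zero {a : EReal} (ha : 0 < a) : MemI a 0 := by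
  constructor
  · simpa using EReal.neg_lt_neg_iff.2 ha
  · simpa using ha

lemma memI_neg {a : EReal} {x : ℝ} (hx : MemI a x) : MemI a (-x) := by
  refine ⟨?_, ?_⟩
  · rw [EReal.coe_neg]; exact EReal.neg_lt_neg_iff.2 hx.2
  · rw [EReal.coe_neg]
    have := EReal.neg_lt_neg_iff.2 hx.1
    rwa [neg_neg] at this

lemma exists_b {a : EReal} (ha : 0 < a) : ∃ b : ℝ, 0 < b ∧ MemI a b := by
  by_cases htop : a = ⊤
  · subst htop
    exact ⟨1, one_pos, by rw [EReal.neg_top]; exact EReal.bot_lt_coe 1, EReal.coe_lt_top 1⟩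
  · have hne : a ≠ ⊥ := ne_bot_of_gt ha
    have h1 : 0 < a.toReal := by
      rw [← EReal.coe_toReal htop hne] at ha; exact_mod_cast ha
    refine ⟨a.toReal/2, by linarith, ?_, ?_⟩
    · calc -a < 0 := by simpa using EReal.neg_lt_neg_iff.2 ha
        _ < ((a.toReal/2 : ℝ) : EReal) := by exact_mod_cast half_pos h1
    · conv_rhs => rw [← EReal.coe_toReal htop hne]
      exact_mod_cast half_lt_self h1

section key
variable {a : EReal} {f : ℝ → ℝ}
variable (h : ∀ A B : Matrix (Fin 2) (Fin 2) ℝ, A.IsSymm → B.IsSymm →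
      EntriesIn a A → EntriesIn a B → (A - B).PosSemidef →
      (A.map f - B.map f).PosSemidef)
include h

lemma mono {s t : ℝ} (hs : MemI a s) (ht : MemI a t) (hst : s ≤ t) : f s ≤ f t := by
  have hM := h !![t, t; t, t] !![s, s; s, s]
    (by ext i j; fin_cases i <;> fin_cases j <;> simp [Matrix.IsSymm])
    (by ext i j; fin_cases i <;> fin_cases j <;> simp [Matrix.IsSymm])
    (fun i j => by fin_cases i <;> fin_cases j <;> exact ht)
    (fun i j => by fin_cases i <;> fin_cases j <;> exact hs)
    (by
      have e : (!![t, t; t, t] : Matrix (Fin 2) (Fin 2) ℝ) - !![s, s; s, s]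
          = !![t-s, t-s; t-s, t-s] := by
        ext i j; fin_cases i <;> fin_cases j <;> simp
      rw [e]
      rw [Matrix.posSemidef_iff_dotProduct_mulVec]
      constructor
      · ext i j; fin_cases i <;> fin_cases j <;> simp [Matrix.conjTranspose_apply]
      · intro x
        have e2 : (star x) ⬝ᵥ ((!![t-s, t-s; t-s, t-s] : Matrix (Fin 2) (Fin 2) ℝ) *ᵥ x)
            = (t - s) * (x 0 + x 1)^2 := by
          simp [Matrix.mulVec, dotProduct, Fin.sum_univ_two]; ring
        rw [e2]
        have : 0 ≤ t - s := by linarith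
        positivity)
  have := hM.dotProduct_mulVec_nonneg (![1, 0] : Fin 2 → ℝ)
  simp [Matrix.mulVec, dotProduct, Fin.sum_univ_two, Matrix.map_apply] at this
  linarith

lemma shift_le {u w d : ℝ} (hd : 0 ≤ d) (hu : MemI a u) (hw : MemI a w)
    (hud : MemI a (u + d)) (hwd : MemI a (w + d)) :
    f (w + d) - f w ≤ f (u + d) - f u := by
  have hM := h !![u+d, w+d; w+d, u+d] !![u, w; w, u]
    (by ext i j; fin_cases i <;> fin_cases j <;> simp [Matrix.IsSymm])
    (by ext i j; fin_cases i <;> fin_cases j <;> simp [Matrix.IsSymm])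
    (fun i j => by fin_cases i <;> fin_cases j <;> first | exact hud | exact hwd)
    (fun i j => by fin_cases i <;> fin_cases j <;> first | exact hu | exact hw)
    (by
      have e : (!![u+d, w+d; w+d, u+d] : Matrix (Fin 2) (Fin 2) ℝ) - !![u, w; w, u]
          = !![d, d; d, d] := by
        ext i j; fin_cases i <;> fin_cases j <;> simp
      rw [e]
      rw [Matrix.posSemidef_iff_dotProduct_mulVec]
      constructor
      · ext i j; fin_cases i <;> fin_cases j <;> simp [Matrix.conjTranspose_apply]
      · intro x
        have e2 : (star x) ⬝ᵥ ((!![d, d; d, d] : Matrix (Fin 2) (Fin 2) ℝ) *ᵥ x)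
            = d * (x 0 + x 1)^2 := by
          simp [Matrix.mulVec, dotProduct, Fin.sum_univ_two]; ring
        rw [e2]; positivity)
  have := hM.dotProduct_mulVec_nonneg (![1, -1] : Fin 2 → ℝ)
  simp [Matrix.mulVec, dotProduct, Fin.sum_univ_two, Matrix.map_apply] at this
  linarith

lemma shift_eq {u w d : ℝ} (hd : 0 ≤ d) (hu : MemI a u) (hw : MemI a w)
    (hud : MemI a (u + d)) (hwd : MemI a (w + d)) :
    f (u + d) - f u = f (w + d) - f w :=
  le_antisymm (shift_le h hd hw hu hwd hud) (shift_le h hd hu hw hud hwd)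

lemma addf (ha : 0 < a) (x y : ℝ) (hx : MemI a x) (hy : MemI a y) (hxy : MemI a (x + y)) :
    f (x + y) + f 0 = f x + f y := by
  rcases le_total 0 y with hy0|hy0
  · have h2 := shift_eq h hy0 hx (memI_zero ha) hxy (by rw [zero_add]; exact hy)
    rw [zero_add] at h2
    linarith
  · have h2 := shift_eq h (d := -y) (by linarith) hxy hy
      (by rw [show x + y + -y = x from by ring]; exact hx)
      (by rw [show y + -y = (0:ℝ) from by ring]; exact memI_zero ha)
    rw [show x + y + -y = x from by ring, show y + -y = (0:ℝ) from by ring] at h2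
    linarith

end key

section cauchy
variable {a : EReal} {f : ℝ → ℝ} (ha : 0 < a)
variable (hmono : ∀ {s t : ℝ}, MemI a s → MemI a t → s ≤ t → f s ≤ f t)
variable (hadd : ∀ x y : ℝ, MemI a x → MemI a y → MemI a (x + y) →
  f (x + y) + f 0 = f x + f y)
include ha hadd

lemma half {x : ℝ} (hx : MemI a x) : f (x/2) - f 0 = (f x - f 0)/2 := by
  have hx2 : MemI a (x/2) := by
    rcases le_total 0 x with h0|h0
    · exact memI_conv (memI_zero ha) hx (by linarith) (by linarith)
    · exact memI_conv hx (memI_zero ha) (by linarith) (by linarith)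
  have h2 := hadd (x/2) (x/2) hx2 hx2 (by rw [show x/2 + x/2 = x from by ring]; exact hx)
  rw [show x/2 + x/2 = x from by ring] at h2
  linarith

lemma halfpow (k : ℕ) {x : ℝ} (hx : MemI a x) (h0 : 0 ≤ x) :
    f (x / 2^k) - f 0 = (f x - f 0) / 2^k := by
  induction k with
  | zero => simp
  | succ k ih =>
    have h1 : (1:ℝ) ≤ 2^k := one_le_pow₀ (by norm_num)
    have hxk : MemI a (x / 2^k) :=
      memI_conv (memI_zero ha) hx (by positivity) (div_le_self h0 h1)
    have h2 := half ha hadd hxk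
    rw [show x / 2^k / 2 = x / 2^(k+1) from by rw [div_div]; ring_nf] at h2
    rw [h2, ih]
    ring

lemma natmul (n : ℕ) {t : ℝ} (ht0 : 0 ≤ t) (ht : MemI a t) (hnt : MemI a ((n:ℝ)*t)) :
    f ((n:ℝ)*t) - f 0 = n * (f t - f 0) := by
  induction n with
  | zero => simp
  | succ n ih =>
    have hmem : MemI a ((n:ℝ)*t) :=
      memI_conv (memI_zero ha) hnt (by positivity) (by push_cast; nlinarith)
    have e : (n:ℝ)*t + t = ((n+1:ℕ):ℝ)*t := by push_cast; ring
    have h2 := hadd ((n:ℝ)*t) t hmem ht (by rw [e]; exact hnt)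
    rw [e] at h2
    have h3 := ih hmem
    push_cast
    push_cast at h2 h3
    linarith

include hmono in
lemma proj {x y : ℝ} (hx : MemI a x) (hy : MemI a y) (hx0 : 0 < x) (hlt : x < y) :
    (f x - f 0) * y = (f y - f 0) * x := by
  have hy0 : 0 < y := lt_trans hx0 hlt
  have gy0 : 0 ≤ f y - f 0 := by
    have := hmono (memI_zero ha) hy hy0.le; linarith
  by_contra hne
  have hD : 0 < |(f x - f 0) * y - (f y - f 0) * x| := abs_pos.2 (sub_ne_zero.2 hne)
  set D := (f x - f 0) * y - (f y - f 0) * x with hDdef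
  obtain ⟨k, hk⟩ := pow_unbounded_of_one_lt
    (max ((f y - f 0)*y/|D|) (y/(y-x))) (one_lt_two (α := ℝ))
  have hN : (0:ℝ) < 2^k := by positivity
  have h1N : (1:ℝ) ≤ 2^k := one_le_pow₀ (by norm_num)
  have hk1 : (f y - f 0)*y/|D| < 2^k := lt_of_le_of_lt (le_max_left _ _) hk
  have hk2 : y/(y-x) < 2^k := lt_of_le_of_lt (le_max_right _ _) hk
  set t := y / 2^k with hts
  have ht0 : 0 < t := div_pos hy0 hN
  have htsmall : t < y - x := by
    rw [hts, div_lt_iff₀ hN]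
    have := (div_lt_iff₀ (sub_pos.2 hlt)).1 hk2
    nlinarith
  set m := ⌊x / t⌋₊ with hms
  have hm1 : (m:ℝ) * t ≤ x := by
    have h5 : (m:ℝ) ≤ x / t := Nat.floor_le (le_of_lt (div_pos hx0 ht0))
    calc (m:ℝ) * t ≤ (x/t) * t := by nlinarith
      _ = x := by field_simp
  have hm2 : x < ((m:ℝ)+1) * t := by
    have h5 : x / t < (m:ℝ) + 1 := Nat.lt_floor_add_one (x/t)
    calc x = (x/t)*t := by field_simp
      _ < ((m:ℝ)+1)*t := by nlinarith
  have hmt : MemI a ((m:ℝ)*t) :=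
    memI_conv (memI_zero ha) hy (by positivity) (by nlinarith)
  have hm1t : MemI a (((m:ℝ)+1)*t) :=
    memI_conv (memI_zero ha) hy (by positivity) (by nlinarith)
  have htm : MemI a t := memI_conv (memI_zero ha) hy ht0.le (div_le_self hy0.le h1N)
  have e1 : f ((m:ℝ)*t) - f 0 = m * (f t - f 0) := natmul ha hadd m ht0.le htm hmt
  have e2 : f (((m:ℝ)+1)*t) - f 0 = ((m:ℝ)+1) * (f t - f 0) := by
    have := natmul ha hadd (m+1) ht0.le htm (by push_cast; exact hm1t)
    push_cast at this
    exact this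
  have e3 : f t - f 0 = (f y - f 0) / 2^k := halfpow ha hadd k hy hy0.le
  have le1 : f ((m:ℝ)*t) ≤ f x := hmono hmt hx hm1
  have le2 : f x ≤ f (((m:ℝ)+1)*t) := hmono hx hm1t hm2.le
  have a1 : (m:ℝ) * ((f y - f 0)/2^k) ≤ f x - f 0 := by rw [← e3, ← e1]; linarith
  have a2 : f x - f 0 ≤ ((m:ℝ)+1) * ((f y - f 0)/2^k) := by rw [← e3, ← e2]; linarith
  have u1 : (f x - f 0) * y ≤ ((m:ℝ)+1) * ((f y - f 0)/2^k) * y :=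
    mul_le_mul_of_nonneg_right a2 hy0.le
  have u2 : (f y - f 0) * ((m:ℝ)*t) ≤ (f y - f 0) * x := mul_le_mul_of_nonneg_left hm1 gy0
  have l1 : (m:ℝ) * ((f y - f 0)/2^k) * y ≤ (f x - f 0) * y :=
    mul_le_mul_of_nonneg_right a1 hy0.le
  have l2 : (f y - f 0) * x ≤ (f y - f 0) * (((m:ℝ)+1)*t) := mul_le_mul_of_nonneg_left hm2.le gy0
  have q1 : (f y - f 0) * ((m:ℝ)*t) = (m:ℝ) * ((f y - f 0)/2^k) * y := by
    rw [hts]; field_simp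
  have q2 : (f y - f 0) * (((m:ℝ)+1)*t) = ((m:ℝ)+1) * ((f y - f 0)/2^k) * y := by
    rw [hts]; field_simp
  have hub : D ≤ (f y - f 0) * y / 2^k := by
    have hq : ((m:ℝ)+1) * ((f y - f 0)/2^k) * y - (m:ℝ) * ((f y - f 0)/2^k) * y
        = (f y - f 0) * y / 2^k := by ring
    linarith [u1, u2, q1]
  have hlb : -((f y - f 0) * y / 2^k) ≤ D := by
    have hq : (m:ℝ) * ((f y - f 0)/2^k) * y - ((m:ℝ)+1) * ((f y - f 0)/2^k) * y
        = -((f y - f 0) * y / 2^k) := by ring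
    linarith [l1, l2, q2]
  have habs : |D| ≤ (f y - f 0) * y / 2^k := abs_le.2 ⟨hlb, hub⟩
  have hfin : (f y - f 0) * y < 2^k * |D| := (div_lt_iff₀ hD).1 hk1
  have h8 : |D| * 2^k ≤ (f y - f 0) * y := (le_div_iff₀ hN).1 habs
  have h9 : (2:ℝ)^k * |D| = |D| * 2^k := mul_comm _ _
  linarith

end cauchy

end Stmt0Aux

open Stmt0Aux in
/-- Proposition 1.2 (1): if `f[A] ≥ f[B]` for all symmetric 2×2 real matrices `A ≥ B` with
entries in `(-α, α)` (with no positivity assumption on `B`), then `f` is affine on `(-α, α)`. -/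
theorem stmt_0 (a : EReal) (ha : 0 < a) (f : ℝ → ℝ)
    (h : ∀ A B : Matrix (Fin 2) (Fin 2) ℝ, A.IsSymm → B.IsSymm →
      EntriesIn a A → EntriesIn a B → (A - B).PosSemidef →
      (A.map f - B.map f).PosSemidef) :
    ∃ c d : ℝ, ∀ x : ℝ, MemI a x → f x = c * x + d := by
  obtain ⟨b, hb0, hbm⟩ := exists_b ha
  have hmono : ∀ {s t : ℝ}, MemI a s → MemI a t → s ≤ t → f s ≤ f t :=
    fun hs ht hst => mono h hs ht hst
  have hadd : ∀ x y : ℝ, MemI a x → MemI a y → MemI a (x + y) →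
      f (x + y) + f 0 = f x + f y := addf h ha
  have pos_case : ∀ x : ℝ, MemI a x → 0 < x → (f x - f 0) * b = (f b - f 0) * x := by
    intro x hx hx0
    rcases lt_trichotomy x b with hlt|heq|hgt
    · exact proj ha hmono hadd hx hbm hx0 hlt
    · subst heq; ring
    · exact (proj ha hmono hadd hbm hx hb0 hgt).symm
  refine ⟨(f b - f 0)/b, f 0, ?_⟩
  intro x hx
  have hbne : b ≠ 0 := ne_of_gt hb0
  have key : (f x - f 0) * b = (f b - f 0) * x := by
    rcases lt_trichotomy x 0 with hneg|hzero|hpos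
    · have hxn : MemI a (-x) := memI_neg hx
      have h2 := hadd x (-x) hx hxn
        (by rw [show x + -x = (0:ℝ) from by ring]; exact memI_zero ha)
      rw [show x + -x = (0:ℝ) from by ring] at h2
      have h3 := pos_case (-x) hxn (by linarith)
      nlinarith [h3]
    · subst hzero; ring
    · exact pos_case x hx hpos
  field_simp
  nlinarith [key]
end

section
/- Let 0 < α ≤ ∞ and let f be a nonnegative real function on (0,α). The following are equivalent: (a) f is non-decreasing and √-submultiplicative; (b) f is non-decreasing, continuous, and √-submultiplicative; (c) f is identically zero, or there exists a non-decreasing convex function g on (-∞, log α) such that f(t) = exp(g(log t)) for all t ∈ (0,α). -/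
open Matrix

private lemma dyadic_combo (D : Set ℝ) (hD : Convex ℝ D) (g : ℝ → ℝ)
    (hmid : ∀ x ∈ D, ∀ y ∈ D, g ((x + y) / 2) ≤ (g x + g y) / 2) :
    ∀ n : ℕ, ∀ k : ℕ, k ≤ 2 ^ n → ∀ x ∈ D, ∀ y ∈ D,
      g ((k / 2 ^ n : ℝ) * x + (1 - k / 2 ^ n) * y)
        ≤ (k / 2 ^ n : ℝ) * g x + (1 - k / 2 ^ n) * g y := by
  have hcombo : ∀ c : ℝ, 0 ≤ c → c ≤ 1 → ∀ x ∈ D, ∀ y ∈ D, c * x + (1 - c) * y ∈ D := by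
    intro c hc0 hc1 x hx y hy
    simpa [smul_eq_mul] using hD hx hy hc0 (by linarith) (by ring)
  intro n
  induction n with
  | zero =>
    intro k hk x hx y hy
    interval_cases k <;> norm_num
  | succ n ih =>
    intro k hk x hx y hy
    have h2 : (2:ℕ) ^ (n+1) = 2 ^ n + 2 ^ n := by ring
    set i : ℕ := min k (2 ^ n) with hi
    set j : ℕ := k - i with hj
    have hiN : i ≤ 2 ^ n := min_le_right _ _
    have hjN : j ≤ 2 ^ n := by omega
    have hij : i + j = k := by omega
    have hu := ih i hiN x hx y hy
    have hv := ih j hjN x hx y hy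
    set c : ℝ := (i : ℝ) / 2 ^ n with hc
    set d : ℝ := (j : ℝ) / 2 ^ n with hd
    have hc0 : 0 ≤ c := by positivity
    have hd0 : 0 ≤ d := by positivity
    have hc1 : c ≤ 1 := by
      rw [hc, div_le_one (by positivity)]
      exact_mod_cast hiN
    have hd1 : d ≤ 1 := by
      rw [hd, div_le_one (by positivity)]
      exact_mod_cast hjN
    have hmemu : c * x + (1 - c) * y ∈ D := hcombo c hc0 hc1 x hx y hy
    have hmemv : d * x + (1 - d) * y ∈ D := hcombo d hd0 hd1 x hx y hy
    have hm := hmid _ hmemu _ hmemv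
    have hkr : (k : ℝ) / 2 ^ (n+1) = (c + d) / 2 := by
      have hk' : (k : ℝ) = (i : ℝ) + (j : ℝ) := by exact_mod_cast hij.symm
      rw [hc, hd, ← add_div, div_div, ← pow_succ, hk']
    have hpt : (k / 2 ^ (n+1) : ℝ) * x + (1 - k / 2 ^ (n+1)) * y
        = ((c * x + (1 - c) * y) + (d * x + (1 - d) * y)) / 2 := by
      rw [hkr]; ring
    rw [hpt, hkr]
    calc g (((c * x + (1 - c) * y) + (d * x + (1 - d) * y)) / 2)
        ≤ (g (c * x + (1 - c) * y) + g (d * x + (1 - d) * y)) / 2 := hm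
      _ ≤ ((c * g x + (1 - c) * g y) + (d * g x + (1 - d) * g y)) / 2 := by linarith
      _ = (c + d) / 2 * g x + (1 - (c + d) / 2) * g y := by ring

private lemma convexOn_of_monotoneOn_midpoint (D : Set ℝ) (hD : Convex ℝ D)
    (g : ℝ → ℝ) (hmono : MonotoneOn g D)
    (hmid : ∀ x ∈ D, ∀ y ∈ D, g ((x + y) / 2) ≤ (g x + g y) / 2) :
    ConvexOn ℝ D g := by
  have hdy := dyadic_combo D hD g hmid
  have hcombo : ∀ c : ℝ, 0 ≤ c → c ≤ 1 → ∀ x ∈ D, ∀ y ∈ D, c * x + (1 - c) * y ∈ D := by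
    intro c hc0 hc1 x hx y hy
    simpa [smul_eq_mul] using hD hx hy hc0 (by linarith) (by ring)
  have key : ∀ x ∈ D, ∀ y ∈ D, y ≤ x → ∀ p : ℝ, 0 ≤ p → p ≤ 1 →
      g (p * x + (1 - p) * y) ≤ p * g x + (1 - p) * g y := by
    intro x hx y hy hyx p hp0 hp1
    rcases eq_or_lt_of_le hp1 with rfl | hp1'
    · norm_num
    · -- p < 1
      have hM : 0 ≤ g x - g y := by
        have := hmono hy hx hyx; linarith
      set M : ℝ := g x - g y with hMdef
      refine le_of_forall_pos_le_add ?_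
      intro ε hε
      set δ : ℝ := min (ε / (M + 1)) (1 - p) with hδdef
      have hδ0 : 0 < δ := lt_min (by positivity) (by linarith)
      obtain ⟨n, hn⟩ := exists_pow_lt_of_lt_one hδ0 (by norm_num : (1:ℝ)/2 < 1)
      have h2n : (0:ℝ) < 2 ^ n := by positivity
      set k : ℕ := ⌈p * 2 ^ n⌉₊ with hk
      have hkle : k ≤ 2 ^ n := by
        rw [hk]
        apply Nat.ceil_le.2
        push_cast
        nlinarith
      set c : ℝ := (k : ℝ) / 2 ^ n with hc
      have hcp : p ≤ c := by
        rw [hc, le_div_iff₀ h2n]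
        exact Nat.le_ceil _
      have hcub : c < p + δ := by
        have h1 : (k : ℝ) < p * 2 ^ n + 1 := by
          apply Nat.ceil_lt_add_one
          positivity
        have h2 : (1:ℝ) / 2 ^ n < δ := by
          rwa [_root_.one_div_pow] at hn
        rw [hc, div_lt_iff₀ h2n]
        nlinarith [(div_lt_iff₀ h2n).mp h2]
      have hc0 : 0 ≤ c := le_trans hp0 hcp
      have hc1 : c ≤ 1 := by
        rw [hc, div_le_one h2n]; exact_mod_cast hkle
      have hdyk := hdy n k hkle x hx y hy
      have hmem1 : p * x + (1 - p) * y ∈ D := hcombo p hp0 hp1 x hx y hy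
      have hmem2 : c * x + (1 - c) * y ∈ D := hcombo c hc0 hc1 x hx y hy
      have hle : p * x + (1 - p) * y ≤ c * x + (1 - c) * y := by nlinarith
      have hgz : g (p * x + (1 - p) * y) ≤ g (c * x + (1 - c) * y) := hmono hmem1 hmem2 hle
      have hδε : δ * M ≤ ε := by
        have h1 : δ ≤ ε / (M + 1) := min_le_left _ _
        have h2 : ε / (M + 1) * M ≤ ε := by
          rw [div_mul_eq_mul_div, div_le_iff₀ (by linarith)]
          nlinarith
        nlinarith
      have : c * g x + (1 - c) * g y ≤ p * g x + (1 - p) * g y + ε := by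
        have hexp : c * g x + (1 - c) * g y = p * g x + (1 - p) * g y + (c - p) * M := by
          rw [hMdef]; ring
        rw [hexp]
        have : (c - p) * M ≤ δ * M := by nlinarith
        linarith
      calc g (p * x + (1 - p) * y) ≤ g (c * x + (1 - c) * y) := hgz
        _ ≤ c * g x + (1 - c) * g y := by rw [hc] at *; exact hdyk
        _ ≤ p * g x + (1 - p) * g y + ε := this
  refine ⟨hD, ?_⟩
  intro x hx y hy p q hp hq hpq
  simp only [smul_eq_mul]
  have hq' : q = 1 - p := by linarith
  subst hq'
  rcases le_total y x with h | h
  · exact key x hx y hy h p hp (by linarith)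
  · have := key y hy x hx h (1 - p) (by linarith) (by linarith)
    calc g (p * x + (1 - p) * y) = g ((1-p) * y + (1 - (1-p)) * x) := by ring_nf
      _ ≤ (1-p) * g y + (1 - (1-p)) * g x := this
      _ = p * g x + (1 - p) * g y := by ring

private lemma memP_sqrt {a : EReal} {s t : ℝ} (hs : MemP a s) (ht : MemP a t) :
    MemP a (Real.sqrt (s * t)) := by
  refine ⟨Real.sqrt_pos.2 (mul_pos hs.1 ht.1), ?_⟩
  have h1 : Real.sqrt (s * t) ≤ max s t := by
    rcases le_total s t with h | h
    · calc Real.sqrt (s * t) ≤ Real.sqrt (t * t) := Real.sqrt_le_sqrt (by nlinarith [hs.1, ht.1])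
        _ = t := Real.sqrt_mul_self ht.1.le
        _ ≤ max s t := le_max_right _ _
    · calc Real.sqrt (s * t) ≤ Real.sqrt (s * s) := Real.sqrt_le_sqrt (by nlinarith [hs.1, ht.1])
        _ = s := Real.sqrt_mul_self hs.1.le
        _ ≤ max s t := le_max_left _ _
  have h2 : ((max s t : ℝ) : EReal) < a := by
    rcases le_total s t with h | h
    · rw [max_eq_right h]; exact ht.2
    · rw [max_eq_left h]; exact hs.2
  exact lt_of_le_of_lt (EReal.coe_le_coe_iff.2 h1) h2

private lemma pos_everywhere (a : EReal) (f : ℝ → ℝ)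
    (hf : ∀ t, MemP a t → 0 ≤ f t)
    (hmono : MonotoneOn f {t | MemP a t})
    (hsub : ∀ s t, MemP a s → MemP a t → f (Real.sqrt (s * t)) ≤ Real.sqrt (f s * f t))
    (t0 : ℝ) (ht0 : MemP a t0) (hpos : 0 < f t0) :
    ∀ t, MemP a t → 0 < f t := by
  obtain ⟨z, hz1, hz2⟩ := exists_between ht0.2
  have hzt : z ≠ ⊤ := (lt_of_lt_of_le hz2 le_top).ne
  have hzb : z ≠ ⊥ := (lt_trans (EReal.bot_lt_coe t0) hz1).ne'
  set u : ℝ := z.toReal with hu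
  have hcoe : (u : EReal) = z := EReal.coe_toReal hzt hzb
  have ht0u : t0 < u := by
    rw [← EReal.coe_lt_coe_iff, hcoe]; exact hz1
  have hua : (u : EReal) < a := by rw [hcoe]; exact hz2
  have hupos : 0 < u := lt_trans ht0.1 ht0u
  set r : ℝ := t0 / u with hr
  have hr0 : 0 < r := div_pos ht0.1 hupos
  have hr1 : r < 1 := (div_lt_one hupos).2 ht0u
  have main : ∀ n : ℕ, ∀ t, MemP a t → t0 * r ^ n ≤ t → 0 < f t := by
    intro n
    induction n with
    | zero =>
      intro t ht hle
      simp only [pow_zero, mul_one] at hle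
      exact lt_of_lt_of_le hpos (hmono ht0 ht hle)
    | succ n ih =>
      intro t ht hle
      rcases le_or_gt (t0 * r ^ n) t with h | h
      · exact ih t ht h
      · set m : ℝ := t0 * r ^ n with hm
        have hm0 : 0 < m := mul_pos ht0.1 (pow_pos hr0 n)
        have hmt0 : m ≤ t0 := by
          rw [hm]
          nlinarith [pow_le_one₀ hr0.le hr1.le (n := n), ht0.1]
        have hmmem : MemP a m := ⟨hm0, lt_of_le_of_lt (EReal.coe_le_coe_iff.2 hmt0) ht0.2⟩
        set v : ℝ := m ^ 2 / t with hv
        have hv0 : 0 < v := div_pos (pow_pos hm0 2) ht.1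
        have htpos : 0 < t := ht.1
        have hvu : v ≤ u := by
          have hden : (0:ℝ) < t0 * r ^ (n+1) := mul_pos ht0.1 (pow_pos hr0 _)
          have h1 : v ≤ m ^ 2 / (t0 * r ^ (n+1)) := by
            apply div_le_div_of_nonneg_left (pow_pos hm0 2).le hden hle
          have hru : r * u = t0 := by
            rw [hr]; field_simp
          have h2 : m ^ 2 / (t0 * r ^ (n+1)) = u * r ^ n := by
            rw [div_eq_iff hden.ne', hm]
            calc (t0 * r ^ n) ^ 2 = (r * u) * (t0 * r ^ n * r ^ n) := by rw [hru]; ring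
              _ = u * r ^ n * (t0 * r ^ (n+1)) := by rw [pow_succ]; ring
          rw [h2] at h1
          nlinarith [pow_le_one₀ hr0.le hr1.le (n := n)]
        have hvmem : MemP a v := ⟨hv0, lt_of_le_of_lt (EReal.coe_le_coe_iff.2 hvu) hua⟩
        have hst : Real.sqrt (t * v) = m := by
          rw [hv]
          have : t * (m ^ 2 / t) = m ^ 2 := by field_simp
          rw [this, Real.sqrt_sq hm0.le]
        have hfm : 0 < f m := ih m hmmem (le_refl _)
        have h := hsub t v ht hvmem
        rw [hst] at h
        have hprod : 0 < f t * f v := by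
          have : 0 < Real.sqrt (f t * f v) := lt_of_lt_of_le hfm h
          nlinarith [Real.sqrt_nonneg (f t * f v), Real.sq_sqrt (show 0 ≤ f t * f v by
            by_contra hc
            push_neg at hc
            have := Real.sqrt_eq_zero_of_nonpos hc.le
            rw [this] at h
            linarith)]
        rcases mul_pos_iff.1 hprod with ⟨h1, _⟩ | ⟨h1, h2⟩
        · exact h1
        · exact absurd (hf v hvmem) (not_le.2 h2)
  intro t ht
  obtain ⟨n, hn⟩ := exists_pow_lt_of_lt_one (show 0 < t / t0 from div_pos ht.1 ht0.1) hr1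
  exact main n t ht (by rw [mul_comm]; exact le_of_lt ((lt_div_iff₀ ht0.1).1 hn))

private lemma sqrt_exp_mul (x y : ℝ) :
    Real.sqrt (Real.exp x * Real.exp y) = Real.exp ((x + y) / 2) := by
  rw [← Real.exp_add]; exact (Real.exp_half _).symm

/-- Lemma 2.1: for a nonnegative function `f` on `(0, α)` the following are equivalent:
(a) `f` is non-decreasing and √-submultiplicative;
(b) `f` is non-decreasing, continuous and √-submultiplicative;
(c) `f ≡ 0` on `(0, α)`, or `f t = exp (g (log t))` for a non-decreasing convex function `g`
on `(-∞, log α)` (described as the set `{y | exp y < α}`). -/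
theorem stmt_1 (a : EReal) (ha : 0 < a) (f : ℝ → ℝ)
    (hf : ∀ t, MemP a t → 0 ≤ f t) :
    List.TFAE
      [ (MonotoneOn f {t | MemP a t} ∧
          ∀ s t, MemP a s → MemP a t →
            f (Real.sqrt (s * t)) ≤ Real.sqrt (f s * f t)),
        (MonotoneOn f {t | MemP a t} ∧ ContinuousOn f {t | MemP a t} ∧
          ∀ s t, MemP a s → MemP a t →
            f (Real.sqrt (s * t)) ≤ Real.sqrt (f s * f t)),
        ((∀ t, MemP a t → f t = 0) ∨
          ∃ g : ℝ → ℝ,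
            MonotoneOn g {y : ℝ | ((Real.exp y : ℝ) : EReal) < a} ∧
            ConvexOn ℝ {y : ℝ | ((Real.exp y : ℝ) : EReal) < a} g ∧
            ∀ t, MemP a t → f t = Real.exp (g (Real.log t))) ] := by
  set D : Set ℝ := {y : ℝ | ((Real.exp y : ℝ) : EReal) < a} with hD
  have hmemD : ∀ y ∈ D, MemP a (Real.exp y) := fun y hy => ⟨Real.exp_pos y, hy⟩
  have hlogD : ∀ t, MemP a t → Real.log t ∈ D := by
    intro t ht
    show ((Real.exp (Real.log t) : ℝ) : EReal) < a
    rw [Real.exp_log ht.1]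
    exact ht.2
  have hDconv : Convex ℝ D := by
    rw [convex_iff_ordConnected]
    constructor
    intro x hx y hy z hz
    show ((Real.exp z : ℝ) : EReal) < a
    exact lt_of_le_of_lt (EReal.coe_le_coe_iff.2 (Real.exp_le_exp.2 hz.2)) hy
  have hDopen : IsOpen D := by
    have : D = (fun y : ℝ => ((Real.exp y : ℝ) : EReal)) ⁻¹' (Set.Iio a) := rfl
    rw [this]
    exact isOpen_Iio.preimage (continuous_coe_real_ereal.comp Real.continuous_exp)
  tfae_have 2 → 1 := fun h => ⟨h.1, h.2.2⟩
  tfae_have 1 → 3 := by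
    rintro ⟨hmono, hsub⟩
    by_cases hzero : ∀ t, MemP a t → f t = 0
    · exact Or.inl hzero
    · push_neg at hzero
      obtain ⟨t0, ht0, hne⟩ := hzero
      have hpos0 : 0 < f t0 := (hf t0 ht0).lt_of_ne (Ne.symm hne)
      have hpos := pos_everywhere a f hf hmono hsub t0 ht0 hpos0
      refine Or.inr ⟨fun y => Real.log (f (Real.exp y)), ?_, ?_, ?_⟩
      · intro y hy y' hy' hle
        exact Real.log_le_log (hpos _ (hmemD y hy))
          (hmono (hmemD y hy) (hmemD y' hy') (Real.exp_le_exp.2 hle))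
      · apply convexOn_of_monotoneOn_midpoint D hDconv _ ?_ ?_
        · intro y hy y' hy' hle
          exact Real.log_le_log (hpos _ (hmemD y hy))
            (hmono (hmemD y hy) (hmemD y' hy') (Real.exp_le_exp.2 hle))
        · intro x hx y hy
          have hmidmem : (x + y) / 2 ∈ D := by
            have h := hDconv hx hy (le_of_lt one_half_pos) (le_of_lt one_half_pos)
              (by norm_num : (1:ℝ)/2 + 1/2 = 1)
            have heq : (1/2 : ℝ) • x + (1/2 : ℝ) • y = (x + y) / 2 := by
              simp only [smul_eq_mul]; ring
            rwa [heq] at h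
          have h := hsub (Real.exp x) (Real.exp y) (hmemD x hx) (hmemD y hy)
          rw [sqrt_exp_mul] at h
          have hlog := Real.log_le_log (hpos _ (hmemD _ hmidmem)) h
          have hfx : 0 < f (Real.exp x) := hpos _ (hmemD x hx)
          have hfy : 0 < f (Real.exp y) := hpos _ (hmemD y hy)
          rw [Real.log_sqrt (mul_nonneg hfx.le hfy.le), Real.log_mul hfx.ne' hfy.ne'] at hlog
          simpa using hlog.trans_eq (by ring)
      · intro t ht
        simp only []
        rw [Real.exp_log ht.1, Real.exp_log (hpos t ht)]
  tfae_have 3 → 2 := by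
    rintro (hzero | ⟨g, hgmono, hgconv, hfeq⟩)
    · refine ⟨?_, ?_, ?_⟩
      · intro x hx y hy _
        rw [hzero x hx, hzero y hy]
      · exact continuousOn_const.congr fun t ht => hzero t ht
      · intro s t hs ht
        rw [hzero _ (memP_sqrt hs ht), hzero s hs, hzero t ht]
        simp
    · have hmono : MonotoneOn f {t | MemP a t} := by
        intro x hx y hy hxy
        rw [hfeq x hx, hfeq y hy]
        exact Real.exp_le_exp.2 (hgmono (hlogD x hx) (hlogD y hy)
          (Real.log_le_log hx.1 hxy))
      refine ⟨hmono, ?_, ?_⟩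
      · have hgcont : ContinuousOn g D := hgconv.continuousOn hDopen
        have hcomp : ContinuousOn (fun t => Real.exp (g (Real.log t))) {t | MemP a t} := by
          apply Real.continuous_exp.comp_continuousOn
          apply hgcont.comp
          · exact Real.continuousOn_log.mono fun t ht => by
              simp only [Set.mem_compl_iff, Set.mem_singleton_iff]
              exact ne_of_gt ht.1
          · intro t ht
            exact hlogD t ht
        exact hcomp.congr fun t ht => hfeq t ht
      · intro s t hs ht
        have hsD := hlogD s hs
        have htD := hlogD t ht
        have hmemst := memP_sqrt hs ht
        have hlogst : Real.log (Real.sqrt (s * t)) = (Real.log s + Real.log t) / 2 := by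
          rw [Real.log_sqrt (mul_nonneg hs.1.le ht.1.le), Real.log_mul hs.1.ne' ht.1.ne']
        have hmid := hgconv.2 hsD htD (le_of_lt one_half_pos) (le_of_lt one_half_pos)
          (by norm_num : (1:ℝ)/2 + 1/2 = 1)
        simp only [smul_eq_mul] at hmid
        rw [hfeq _ hmemst, hfeq s hs, hfeq t ht, hlogst, sqrt_exp_mul]
        apply Real.exp_le_exp.2
        calc g ((Real.log s + Real.log t) / 2)
            = g (1/2 * Real.log s + 1/2 * Real.log t) := by ring_nf
          _ ≤ 1/2 * g (Real.log s) + 1/2 * g (Real.log t) := hmid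
          _ = (g (Real.log s) + g (Real.log t)) / 2 := by ring
  tfae_finish
end

section
/- Let 0 < α ≤ ∞ and let f be a real function on (-α,α). Then f is S-positive of order 2 if and only if the following three conditions hold: the restriction of f to (0,α) is nonnegative, non-decreasing, and √-submultiplicative; 0 ≤ f(0) and f(0) ≤ f(0+) where f(0+) := lim_{t↘0} f(t) (this limit exists); and |f(-t)| ≤ f(t) for all t ∈ (0,α). -/
open Matrix

lemma quad_nonneg {p q r x y : ℝ} (hp : 0 ≤ p) (hr : 0 ≤ r) (h : q^2 ≤ p*r) :
    0 ≤ p*x^2 + 2*q*x*y + r*y^2 := by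
  have hq' : |q| ≤ Real.sqrt (p*r) := by
    rw [← Real.sqrt_sq_eq_abs]
    exact Real.sqrt_le_sqrt h
  have hpr : Real.sqrt (p*r) = Real.sqrt p * Real.sqrt r := Real.sqrt_mul hp r
  have h1 : Real.sqrt p ^ 2 = p := Real.sq_sqrt hp
  have h2 : Real.sqrt r ^ 2 = r := Real.sq_sqrt hr
  set u := Real.sqrt p with hu
  set v := Real.sqrt r with hv
  have key : 2*(u*v)*(|x| * |y|) ≤ p*x^2 + r*y^2 := by
    have h3 := sq_nonneg (u * |x| - v * |y|)
    have hx : |x|^2 = x^2 := sq_abs x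
    have hy2 : |y|^2 = y^2 := sq_abs y
    nlinarith [h3]
  have h4 : |q| * |x * y| ≤ (u*v) * |x * y| := by
    apply mul_le_mul_of_nonneg_right _ (abs_nonneg _)
    rw [← hpr]; exact hq'
  have h5 : -(q*(x*y)) ≤ |q| * |x * y| := by
    rw [← abs_mul]; exact neg_le_abs _
  have h6 : |x * y| = |x| * |y| := abs_mul x y
  rw [h6] at h4 h5
  linarith [key, h4, h5]

lemma psd2_iff (M : Matrix (Fin 2) (Fin 2) ℝ) :
    M.PosSemidef ↔ (M 1 0 = M 0 1 ∧ 0 ≤ M 0 0 ∧ 0 ≤ M 1 1 ∧ (M 0 1)^2 ≤ M 0 0 * M 1 1) := by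
  rw [posSemidef_iff_dotProduct_mulVec]
  constructor
  · rintro ⟨hh, hq⟩
    have hsym : M 1 0 = M 0 1 := by
      have := hh.apply 0 1
      simpa using this
    have e : ∀ x y : ℝ, 0 ≤ M 0 0 * x^2 + 2 * (M 0 1) * x * y + M 1 1 * y^2 := by
      intro x y
      have := hq ![x, y]
      simp [dotProduct, mulVec, Fin.sum_univ_two, hsym] at this
      nlinarith [this]
    have h00 : 0 ≤ M 0 0 := by have := e 1 0; nlinarith
    have h11 : 0 ≤ M 1 1 := by have := e 0 1; nlinarith
    refine ⟨hsym, h00, h11, ?_⟩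
    rcases eq_or_lt_of_le h00 with h0 | h0
    · rcases eq_or_lt_of_le h11 with h1 | h1
      · have := e 1 (-(M 0 1)); nlinarith
      · have := e (M 1 1) (-(M 0 1)); nlinarith
    · have := e (M 0 1) (-(M 0 0)); nlinarith
  · rintro ⟨hsym, h00, h11, hdet⟩
    constructor
    · ext i j
      fin_cases i <;> fin_cases j <;> simp [conjTranspose_apply, hsym]
    · intro x
      have := quad_nonneg h00 h11 hdet (x := x 0) (y := x 1)
      simp [dotProduct, mulVec, Fin.sum_univ_two, hsym]
      nlinarith [this]

/-- Proposition 2.2: `f` is S-positive of order 2 on `(-α, α)` iff `f` restricted to `(0, α)`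
is nonnegative, non-decreasing and √-submultiplicative, `0 ≤ f(0) ≤ f(0+)` (the right limit
at `0` exists), and `|f(-t)| ≤ f(t)` for all `t ∈ (0, α)`. -/
theorem stmt_2 (a : EReal) (ha : 0 < a) (f : ℝ → ℝ) :
    SPos a f 2 ↔
      ((∀ t, MemP a t → 0 ≤ f t) ∧
       MonotoneOn f {t | MemP a t} ∧
       (∀ s t, MemP a s → MemP a t →
          f (Real.sqrt (s * t)) ≤ Real.sqrt (f s * f t)) ∧
       0 ≤ f 0 ∧
       (∃ L : ℝ, Filter.Tendsto f (nhdsWithin 0 (Set.Ioi 0)) (nhds L) ∧ f 0 ≤ L) ∧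
       (∀ t, MemP a t → |f (-t)| ≤ f t)) := by
  have hna : (-a : EReal) < ((0:ℝ) : EReal) := by
    rw [show ((0:ℝ):EReal) = -(0:EReal) by simp]
    exact EReal.neg_lt_neg_iff.2 ha
  have memI_of_pos : ∀ t : ℝ, 0 ≤ t → (t : EReal) < a → MemI a t := by
    intro t ht hta
    refine ⟨lt_of_lt_of_le hna ?_, hta⟩
    exact_mod_cast ht
  have memI_of_memP : ∀ t : ℝ, MemP a t → MemI a t := fun t ht =>
    memI_of_pos t ht.1.le ht.2
  have memI_neg : ∀ t : ℝ, MemP a t → MemI a (-t) := by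
    intro t ht
    constructor
    · rw [EReal.coe_neg]
      exact EReal.neg_lt_neg_iff.2 ht.2
    · calc ((-t : ℝ) : EReal) < ((0:ℝ):EReal) := by exact_mod_cast (by linarith [ht.1] : (-t:ℝ) < 0)
        _ < a := by simpa using ha
  have memI_zero : MemI a 0 := ⟨by simpa using hna, by simpa using ha⟩
  constructor
  · -- forward direction
    intro hS
    -- main extraction tool
    have key : ∀ x y z : ℝ, MemI a x → MemI a y → MemI a z → 0 ≤ x → 0 ≤ z → y^2 ≤ x*z →
        (f y)^2 ≤ f x * f z ∧ 0 ≤ f x ∧ 0 ≤ f z := by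
      intro x y z hx hy hz hx0 hz0 hyz
      set M : Matrix (Fin 2) (Fin 2) ℝ := !![x, y; y, z] with hM
      have hMe : M 0 0 = x ∧ M 0 1 = y ∧ M 1 0 = y ∧ M 1 1 = z := by
        refine ⟨?_, ?_, ?_, ?_⟩ <;> simp [hM]
      have hpsd : M.PosSemidef := by
        rw [psd2_iff]
        rw [hMe.1, hMe.2.1, hMe.2.2.1, hMe.2.2.2]
        exact ⟨rfl, hx0, hz0, hyz⟩
      have hent : EntriesIn a M := by
        intro i j
        fin_cases i <;> fin_cases j <;>
          simp only [hM, Matrix.cons_val_zero, Matrix.cons_val_one, Matrix.head_cons,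
            Matrix.cons_val', Matrix.empty_val', Matrix.cons_val_fin_one, Matrix.head_fin_const] <;>
          first | exact hx | exact hy | exact hz
      have hmap := (psd2_iff _).1 (hS M hent hpsd)
      rw [Matrix.map_apply, Matrix.map_apply, Matrix.map_apply, Matrix.map_apply,
        hMe.1, hMe.2.1, hMe.2.2.2] at hmap
      exact ⟨hmap.2.2.2, hmap.2.1, hmap.2.2.1⟩
    have hnn : ∀ t, MemP a t → 0 ≤ f t := by
      intro t ht
      exact (key t t t (memI_of_memP t ht) (memI_of_memP t ht) (memI_of_memP t ht)
        ht.1.le ht.1.le (by nlinarith)).2.1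
    have hmono : MonotoneOn f {t | MemP a t} := by
      intro x hx y hy hxy
      have h := key x x y (memI_of_memP x hx) (memI_of_memP x hx) (memI_of_memP y hy)
        hx.1.le hy.1.le (by nlinarith [hx.1])
      rcases eq_or_lt_of_le h.2.1 with h0 | h0
      · rw [← h0]; exact h.2.2
      · nlinarith [h.1]
    have hf0 : 0 ≤ f 0 := by
      have := key 0 0 0 memI_zero memI_zero memI_zero le_rfl le_rfl (by norm_num)
      exact this.2.1
    have hf0le : ∀ t, MemP a t → f 0 ≤ f t := by
      intro t ht
      have h := key 0 0 t memI_zero memI_zero (memI_of_memP t ht) le_rfl ht.1.le (by nlinarith [ht.1])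
      rcases eq_or_lt_of_le h.2.1 with h0 | h0
      · rw [← h0]; exact h.2.2
      · nlinarith [h.1]
    have hneg : ∀ t, MemP a t → |f (-t)| ≤ f t := by
      intro t ht
      have h := key t (-t) t (memI_of_memP t ht) (memI_neg t ht) (memI_of_memP t ht)
        ht.1.le ht.1.le (by ring_nf; nlinarith)
      rcases abs_cases (f (-t)) with ⟨he, _⟩ | ⟨he, _⟩ <;> rw [he] <;> nlinarith [h.1, h.2.1]
    have hsub : ∀ s t, MemP a s → MemP a t →
        f (Real.sqrt (s * t)) ≤ Real.sqrt (f s * f t) := by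
      intro s t hs ht
      have hst : 0 < s * t := mul_pos hs.1 ht.1
      have hsq : Real.sqrt (s * t) ^ 2 = s * t := Real.sq_sqrt hst.le
      have hle : Real.sqrt (s * t) ≤ max s t := by
        rw [← Real.sqrt_sq (le_max_of_le_left hs.1.le)]
        apply Real.sqrt_le_sqrt
        rcases le_total s t with h | h
        · rw [max_eq_right h]; nlinarith [hs.1, ht.1]
        · rw [max_eq_left h]; nlinarith [hs.1, ht.1]
      have hmaxa : ((max s t : ℝ) : EReal) < a := by
        rcases le_total s t with h | h
        · rw [max_eq_right h]; exact ht.2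
        · rw [max_eq_left h]; exact hs.2
      have hsa : ((Real.sqrt (s * t) : ℝ) : EReal) < a :=
        lt_of_le_of_lt (EReal.coe_le_coe_iff.2 hle) hmaxa
      have hmem : MemP a (Real.sqrt (s * t)) := ⟨Real.sqrt_pos.2 hst, hsa⟩
      have h := key s (Real.sqrt (s * t)) t (memI_of_memP s hs) (memI_of_memP _ hmem)
        (memI_of_memP t ht) hs.1.le ht.1.le (by rw [hsq])
      rw [Real.le_sqrt (hnn _ hmem)]
      · exact h.1
      · exact mul_nonneg (hnn s hs) (hnn t ht)
    refine ⟨hnn, hmono, hsub, hf0, ?_, hneg⟩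
    -- limit
    obtain ⟨c, hc0, hca⟩ := exists_between ha
    lift c to ℝ using ⟨(hca.trans_le le_top).ne, ne_bot_of_gt hc0⟩ with c
    have hc0' : (0:ℝ) < c := by exact_mod_cast hc0
    have hsubset : Set.Ioo (0:ℝ) c ⊆ {t | MemP a t} := by
      intro t ht
      exact ⟨ht.1, lt_trans (EReal.coe_lt_coe_iff.2 ht.2) hca⟩
    have hmono' : MonotoneOn f (Set.Ioo (0:ℝ) c) := hmono.mono hsubset
    have hne : (Set.Ioo (0:ℝ) c).Nonempty := ⟨c/2, by constructor <;> linarith⟩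
    have hbdd : BddBelow (f '' Set.Ioo (0:ℝ) c) := by
      refine ⟨0, ?_⟩
      rintro _ ⟨t, ht, rfl⟩
      exact hnn t (hsubset ht)
    refine ⟨sInf (f '' Set.Ioo (0:ℝ) c),
      MonotoneOn.tendsto_nhdsWithin_Ioo_right hne hmono' hbdd, ?_⟩
    apply le_csInf (hne.image f)
    rintro _ ⟨t, ht, rfl⟩
    exact hf0le t (hsubset ht)
  · -- reverse direction
    rintro ⟨hnn, hmono, hsub, hf0, ⟨L, hL, hf0L⟩, hneg⟩
    have hLle : ∀ t, MemP a t → L ≤ f t := by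
      intro t ht
      refine le_of_tendsto hL ?_
      filter_upwards [Ioo_mem_nhdsGT_of_mem (Set.left_mem_Ico.2 ht.1)] with s hs
      exact hmono ⟨hs.1, lt_trans (EReal.coe_lt_coe_iff.2 hs.2) ht.2⟩ ht hs.2.le
    have hf0le : ∀ t, MemP a t → f 0 ≤ f t := fun t ht => hf0L.trans (hLle t ht)
    intro A hent hA
    obtain ⟨hsym, h00, h11, hdet⟩ := (psd2_iff A).1 hA
    set p := A 0 0
    set q := A 0 1
    set r := A 1 1
    have hpa : (p : EReal) < a := (hent 0 0).2
    have hra : (r : EReal) < a := (hent 1 1).2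
    have hqa : -a < (q : EReal) ∧ (q : EReal) < a := hent 0 1
    -- nonnegativity of f at nonneg points below a
    have fnn : ∀ t : ℝ, 0 ≤ t → (t : EReal) < a → 0 ≤ f t := by
      intro t ht hta
      rcases eq_or_lt_of_le ht with h | h
      · rw [← h]; exact hf0
      · exact hnn t ⟨h, hta⟩
    have ff0le : ∀ t : ℝ, 0 ≤ t → (t : EReal) < a → f 0 ≤ f t := by
      intro t ht hta
      rcases eq_or_lt_of_le ht with h | h
      · rw [← h]
      · exact hf0le t ⟨h, hta⟩

    rw [psd2_iff]
    refine ⟨by simp only [Matrix.map_apply]; exact congrArg f hsym, ?_, ?_, ?_⟩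
    · rw [Matrix.map_apply]; exact fnn p h00 hpa
    · rw [Matrix.map_apply]; exact fnn r h11 hra
    · rw [Matrix.map_apply, Matrix.map_apply, Matrix.map_apply]
      show f q ^ 2 ≤ f p * f r
      rcases eq_or_ne q 0 with hq | hq
      · rw [hq]
        have h1 : f 0 ≤ f p := ff0le p h00 hpa
        have h2 : f 0 ≤ f r := ff0le r h11 hra
        nlinarith [hf0]
      · have hq2 : 0 < q^2 := by positivity
        have hp : 0 < p := by
          rcases eq_or_lt_of_le h00 with h | h
          · exfalso; nlinarith [mul_nonneg h00 h11]
          · exact h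
        have hr : 0 < r := by
          rcases eq_or_lt_of_le h11 with h | h
          · exfalso; nlinarith
          · exact h
        have habs : |q| ≤ Real.sqrt (p * r) := by
          rw [← Real.sqrt_sq_eq_abs]
          exact Real.sqrt_le_sqrt hdet
        have hsqrt_lt : ((Real.sqrt (p * r) : ℝ) : EReal) < a := by
          have hle : Real.sqrt (p * r) ≤ max p r := by
            rw [← Real.sqrt_sq (le_max_of_le_left hp.le)]
            apply Real.sqrt_le_sqrt
            rcases le_total p r with h | h
            · rw [max_eq_right h]; nlinarith
            · rw [max_eq_left h]; nlinarith
          refine lt_of_le_of_lt (EReal.coe_le_coe_iff.2 hle) ?_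
          rcases le_total p r with h | h
          · rw [max_eq_right h]; exact hra
          · rw [max_eq_left h]; exact hpa
        have hqmem : MemP a |q| := by
          refine ⟨abs_pos.2 hq, ?_⟩
          rcases abs_cases q with ⟨h, _⟩ | ⟨h, _⟩ <;> rw [h]
          · exact hqa.2
          · rw [EReal.coe_neg]
            exact EReal.neg_lt_comm.1 hqa.1
        have hsmem : MemP a (Real.sqrt (p * r)) :=
          ⟨Real.sqrt_pos.2 (mul_pos hp hr), hsqrt_lt⟩
        have h1 : f |q| ≤ f (Real.sqrt (p * r)) := hmono hqmem hsmem habs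
        have h2 : f (Real.sqrt (p * r)) ≤ Real.sqrt (f p * f r) :=
          hsub p r ⟨hp, hpa⟩ ⟨hr, hra⟩
        have h3 : |f q| ≤ f |q| := by
          rcases abs_cases q with ⟨h, h'⟩ | ⟨h, h'⟩
          · have hq0 : 0 < q := lt_of_le_of_ne h' (Ne.symm hq)
            rw [h, abs_of_nonneg (hnn q ⟨hq0, hqa.2⟩)]
          · have e : -|q| = q := by rw [h]; ring
            have h7 := hneg |q| hqmem
            rw [e] at h7
            exact h7
        have h4 : f |q| ≤ Real.sqrt (f p * f r) := h1.trans h2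
        have h5 : 0 ≤ f |q| := hnn _ hqmem
        have h6 : (f |q|)^2 ≤ f p * f r := by
          have := Real.sq_sqrt (mul_nonneg (fnn p h00 hpa) (fnn r h11 hra))
          nlinarith [Real.sqrt_nonneg (f p * f r)]
        calc (f q)^2 = |f q|^2 := (sq_abs _).symm
          _ ≤ (f |q|)^2 := by nlinarith [abs_nonneg (f q)]
          _ ≤ f p * f r := h6
end

section
/- Let 0 < α ≤ ∞ and let f be a real function on (-α,α). If f is S-positive of order 3, then f is continuous on (-α,α). -/
open Matrix

lemma memI_of_abs {a : EReal} {x y : ℝ} (hy : |x| ≤ y) (hya : (y : EReal) < a) : MemI a x := by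
  rw [abs_le] at hy
  refine ⟨lt_of_lt_of_le ?_ (EReal.coe_le_coe_iff.mpr hy.1),
    lt_of_le_of_lt (EReal.coe_le_coe_iff.mpr hy.2) hya⟩
  rw [show ((-y : ℝ) : EReal) = -(y : EReal) from EReal.coe_neg y]
  exact EReal.neg_lt_neg_iff.mpr hya

lemma sPos_nonneg {a : EReal} {f : ℝ → ℝ} (h : SPos a f 3) {x : ℝ}
    (hx : 0 ≤ x) (hxa : (x : EReal) < a) : 0 ≤ f x := by
  set B : Matrix (Fin 3) (Fin 3) ℝ := !![x,0,0;0,0,0;0,0,0] with hB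
  have hE : EntriesIn a B := by
    intro i j
    fin_cases i <;> fin_cases j <;>
      exact memI_of_abs (by simp [hB, Matrix.vecHead, Matrix.vecTail, abs_of_nonneg hx, hx]) hxa
  have hP : B.PosSemidef := by
    refine Matrix.PosSemidef.of_dotProduct_mulVec_nonneg ?_ ?_
    · ext i j
      fin_cases i <;> fin_cases j <;>
        simp [hB, Matrix.vecHead, Matrix.vecTail, Matrix.conjTranspose_apply]
    · intro v
      simp [hB, Matrix.vecHead, Matrix.vecTail, star, dotProduct, mulVec, Fin.sum_univ_three]
      nlinarith [sq_nonneg (v 0), hx]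
  have := (h B hE hP).dotProduct_mulVec_nonneg ![1, 0, 0]
  simpa [hB, Matrix.vecHead, Matrix.vecTail, star, dotProduct, mulVec, Fin.sum_univ_three,
    Matrix.map_apply] using this

lemma sPos_mono {a : EReal} {f : ℝ → ℝ} (h : SPos a f 3) {x y : ℝ}
    (hy : 0 ≤ y) (hyx : y ≤ x) (hxa : (x : EReal) < a) : f y ≤ f x := by
  set B : Matrix (Fin 3) (Fin 3) ℝ := !![x,y,0;y,y,0;0,0,0] with hB
  have hx : 0 ≤ x := hy.trans hyx
  have hE : EntriesIn a B := by
    intro i j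
    fin_cases i <;> fin_cases j <;>
      exact memI_of_abs
        (by simp [hB, Matrix.vecHead, Matrix.vecTail, abs_of_nonneg, hx, hy, hyx]) hxa
  have hP : B.PosSemidef := by
    refine Matrix.PosSemidef.of_dotProduct_mulVec_nonneg ?_ ?_
    · ext i j
      fin_cases i <;> fin_cases j <;>
        simp [hB, Matrix.vecHead, Matrix.vecTail, Matrix.conjTranspose_apply]
    · intro v
      simp [hB, Matrix.vecHead, Matrix.vecTail, star, dotProduct, mulVec, Fin.sum_univ_three]
      nlinarith [sq_nonneg (v 0 + v 1), sq_nonneg (v 0), hy, hyx]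
  have := (h B hE hP).dotProduct_mulVec_nonneg ![1, -1, 0]
  simp [hB, Matrix.vecHead, Matrix.vecTail, star, dotProduct, mulVec, Fin.sum_univ_three,
    Matrix.map_apply] at this
  linarith

lemma sPos_key {a : EReal} {f : ℝ → ℝ} (h : SPos a f 3) (p q r m : ℝ)
    (h1 : MemI a (r^2+m^2)) (h2 : MemI a (r*p+m*q)) (h3 : MemI a (r*p-m*q))
    (h4 : MemI a (p^2+q^2)) (h5 : MemI a (p^2-q^2)) (k : ℝ) :
    0 ≤ k^2 * f (r^2+m^2) + 2*k*(f (r*p+m*q) - f (r*p-m*q)) + 2*(f (p^2+q^2) - f (p^2-q^2)) := by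
  set B : Matrix (Fin 3) (Fin 3) ℝ :=
    !![r^2+m^2, r*p+m*q, r*p-m*q;
       r*p+m*q, p^2+q^2, p^2-q^2;
       r*p-m*q, p^2-q^2, p^2+q^2] with hB
  have hE : EntriesIn a B := by
    intro i j
    fin_cases i <;> fin_cases j <;> simpa [hB] using ‹_›
  have hP : B.PosSemidef := by
    refine Matrix.PosSemidef.of_dotProduct_mulVec_nonneg ?_ ?_
    · ext i j
      fin_cases i <;> fin_cases j <;> simp [hB, Matrix.conjTranspose_apply] <;> ring
    · intro v
      simp [hB, star, dotProduct, mulVec, Fin.sum_univ_three]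
      nlinarith [sq_nonneg (r * v 0 + p * v 1 + p * v 2), sq_nonneg (m * v 0 + q * v 1 - q * v 2)]
  have := (h B hE hP).dotProduct_mulVec_nonneg ![k, 1, -1]
  simp [hB, star, dotProduct, mulVec, Fin.sum_univ_three, Matrix.map_apply] at this
  nlinarith [this]

lemma quad_bound {F D E : ℝ} (hF : 0 ≤ F)
    (hk : ∀ k : ℝ, 0 ≤ k^2*F + 2*k*D + 2*E) : D^2 ≤ 2*F*E := by
  rcases eq_or_lt_of_le hF with h0 | h0
  · have hE := hk 0
    have hD : D = 0 := by
      by_contra hD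
      have h1 := hk (-(E+1)/D)
      rw [← h0] at h1
      field_simp at h1
      rw [le_div_iff₀ (lt_of_le_of_ne (sq_nonneg D) (Ne.symm (pow_ne_zero 2 hD)))] at h1
      nlinarith [h1, lt_of_le_of_ne (sq_nonneg D) (Ne.symm (pow_ne_zero 2 hD))]
    rw [hD, ← h0]
    nlinarith [hE]
  · have hne : F ≠ 0 := h0.ne'
    have h1 := hk (-D/F)
    have h2 : (-D/F)^2 * F = D^2/F := by field_simp
    rw [h2] at h1
    have h3 : 2*(-D/F)*D = -(2*(D^2/F)) := by ring
    rw [h3] at h1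
    have h4 : D^2/F ≤ 2*E := by linarith
    calc D^2 = (D^2/F)*F := by field_simp
    _ ≤ (2*E)*F := by nlinarith
    _ = 2*F*E := by ring

set_option maxHeartbeats 1600000 in
/-- Proposition 2.5: if `f` is S-positive of order 3 on `(-α, α)`, then `f` is continuous
on `(-α, α)`. -/
theorem stmt_5 (a : EReal) (ha : 0 < a) (f : ℝ → ℝ) (h : SPos a f 3) :
    ContinuousOn f {x | MemI a x} := by
  suffices hCA : ∀ c : ℝ, MemI a c → ContinuousAt f c by
    intro c hc
    exact (hCA c hc).continuousWithinAt
  intro c hc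
  -- a real bound x0 with |c| < x0 < a
  have hca : ((|c| : ℝ) : EReal) < a := by
    rcases abs_cases c with ⟨hh, _⟩ | ⟨hh, _⟩
    · rw [hh]; exact hc.2
    · rw [hh, EReal.coe_neg]
      exact EReal.neg_lt_of_neg_lt hc.1
  obtain ⟨x0, hx0l, hx0a⟩ := EReal.exists_between_coe_real hca
  have hcx0 : |c| < x0 := by exact_mod_cast hx0l
  have hx0pos : 0 < x0 := (abs_nonneg c).trans_lt hcx0
  -- the clamped monotone function
  set g : ℝ → ℝ := fun y => f (min (max y 0) x0) with hg
  have hclamp_mem : ∀ y : ℝ, 0 ≤ min (max y 0) x0 ∧ min (max y 0) x0 ≤ x0 :=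
    fun y => ⟨le_min (le_max_right y 0) hx0pos.le, min_le_right _ _⟩
  have hgmono : Monotone g := by
    intro y z hyz
    exact sPos_mono h (hclamp_mem y).1
      (min_le_min (max_le_max hyz le_rfl) le_rfl)
      (lt_of_le_of_lt (EReal.coe_le_coe_iff.mpr (hclamp_mem z).2) hx0a)
  -- choose a continuity point x of g in (|c|, x0)
  have hcount : Set.Countable {y | ¬ContinuousAt g y} := hgmono.countable_not_continuousAt
  have hunc : ¬ Set.Ioo |c| x0 ⊆ {y | ¬ContinuousAt g y} := by
    intro hsub
    have h1 : (Set.Ioo |c| x0).Countable := hcount.mono hsub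
    rw [← Cardinal.le_aleph0_iff_set_countable, Cardinal.mk_Ioo_real hcx0] at h1
    exact (Cardinal.aleph0_lt_continuum.not_ge) h1
  obtain ⟨x, hxIoo, hgx⟩ := Set.not_subset.mp hunc
  rw [Set.mem_setOf_eq, not_not] at hgx
  obtain ⟨hxc, hxx0⟩ := hxIoo
  have hxpos : 0 < x := (abs_nonneg c).trans_lt hxc
  have hxa : (x : EReal) < a := lt_of_le_of_lt (EReal.coe_le_coe_iff.mpr hxx0.le) hx0a
  -- f agrees with g on [0, x0]
  have hfg : ∀ y : ℝ, 0 ≤ y → y ≤ x0 → g y = f y := by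
    intro y h1 h2
    simp only [hg]
    rw [max_eq_left h1, min_eq_left h2]
  rw [Metric.continuousAt_iff]
  intro ε hε
  set F := f x0 with hF
  have hF0 : 0 ≤ F := sPos_nonneg h hx0pos.le hx0a
  set η := ε^2 / (2*F+1) with hη
  have hηpos : 0 < η := by positivity
  obtain ⟨δ', hδ'pos, hδ'⟩ := Metric.continuousAt_iff.mp hgx η hηpos
  set v := max (max (x*(3*x-x0)/(x+x0)) (x - δ'/2)) (x/2) with hv
  have hv0 : 0 < v := lt_of_lt_of_le (half_pos hxpos) (le_max_right _ _)
  have hvx : v < x := by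
    apply max_lt (max_lt ?_ (by linarith)) (by linarith)
    rw [div_lt_iff₀ (by linarith)]
    nlinarith
  have hvd : dist v x < δ' := by
    rw [Real.dist_eq, abs_lt]
    have h1 : x - δ'/2 ≤ v := le_trans (le_max_right _ _) (le_max_left _ _)
    constructor <;> linarith
  have hfvx : f v ≤ f x := sPos_mono h hv0.le hvx.le hxa
  have hfv : f x - f v < η := by
    have h1 := hδ' hvd
    rw [hfg v hv0.le (by linarith), hfg x hxpos.le hxx0.le, Real.dist_eq] at h1
    have h2 := abs_lt.mp h1
    linarith [h2.1]
  have hvlb : x*(3*x-x0) ≤ v*(x+x0) := by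
    have h1 : x*(3*x-x0)/(x+x0) ≤ v := le_trans (le_max_left _ _) (le_max_left _ _)
    rw [div_le_iff₀ (by linarith)] at h1
    linarith
  set q := Real.sqrt ((x - v)/2) with hqdef
  set p := Real.sqrt ((x + v)/2) with hpdef
  have hq2 : q^2 = (x-v)/2 := Real.sq_sqrt (by linarith)
  have hp2 : p^2 = (x+v)/2 := Real.sq_sqrt (by linarith)
  have hqpos : 0 < q := Real.sqrt_pos.mpr (by linarith)
  have hppos : 0 < p := Real.sqrt_pos.mpr (by linarith)
  have hpq : p^2 + q^2 = x := by rw [hq2, hp2]; ring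
  have hpq2 : p^2 - q^2 = v := by rw [hq2, hp2]; ring
  set δ := min (x - |c|) (q * Real.sqrt (x0 - x)) with hδdef
  have hδpos : 0 < δ := by
    apply lt_min (by linarith)
    have : 0 < Real.sqrt (x0 - x) := Real.sqrt_pos.mpr (by linarith)
    positivity
  refine ⟨δ, hδpos, ?_⟩
  intro y hyc
  rw [Real.dist_eq] at hyc ⊢
  set r := (y + c)/(2*p) with hrdef
  set m := (y - c)/(2*q) with hmdef
  have ht : r*p + m*q = y := by
    rw [hrdef, hmdef]
    field_simp
    ring
  have hu : r*p - m*q = c := by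
    rw [hrdef, hmdef]
    field_simp
    ring
  have hcabs := abs_lt.mp hxc
  have hyabs : |y| < x := by
    have h1 : |y| ≤ |c| + |y - c| := by
      calc |y| = |c + (y - c)| := by ring_nf
      _ ≤ |c| + |y - c| := abs_add_le _ _
    have h2 : δ ≤ x - |c| := min_le_left _ _
    linarith
  have hyabs' := abs_lt.mp hyabs
  have hr2 : r^2 ≤ (x+x0)/2 := by
    have h1 : (y + c)^2 ≤ 4*x^2 := by
      have h0 := sq_le_sq' (by linarith : -(2*x) ≤ y + c) (by linarith : y + c ≤ 2*x)
      calc (y+c)^2 ≤ (2*x)^2 := h0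
      _ = 4*x^2 := by ring
    have h2 : r^2 = (y+c)^2/(4*p^2) := by
      rw [hrdef]
      rw [div_pow]
      congr 1
      ring
    have h4 : 4*x^2 ≤ (x+x0)*(x+v) := by nlinarith [hvlb]
    rw [h2, hp2, div_le_iff₀ (by linarith)]
    calc (y+c)^2 ≤ 4*x^2 := h1
    _ ≤ (x+x0)*(x+v) := h4
    _ = (x+x0)/2*(4*((x+v)/2)) := by ring
  have hδsq : δ^2 ≤ q^2*(x0-x) := by
    have h1 : δ ≤ q * Real.sqrt (x0 - x) := min_le_right _ _
    have h2 : δ^2 ≤ (q * Real.sqrt (x0 - x))^2 := pow_le_pow_left₀ hδpos.le h1 2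
    rwa [mul_pow, Real.sq_sqrt (by linarith : (0:ℝ) ≤ x0 - x)] at h2
  have hm2 : m^2 ≤ (x0-x)/2 := by
    have h2 : m^2 = (y-c)^2/(4*q^2) := by
      rw [hmdef, div_pow]
      congr 1
      ring
    rw [h2, div_le_iff₀ (by positivity)]
    have h3 : (y-c)^2 < δ^2 := sq_lt_sq' (abs_lt.mp hyc).1 (abs_lt.mp hyc).2
    have h4 : 0 ≤ q^2*(x0-x) := by
      have : (0:ℝ) ≤ x0 - x := by linarith
      positivity
    calc (y-c)^2 ≤ δ^2 := h3.le
    _ ≤ q^2*(x0-x) := hδsq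
    _ ≤ (x0-x)/2*(4*q^2) := by linarith
  have hs : r^2 + m^2 ≤ x0 := by linarith
  have hsnn : (0:ℝ) ≤ r^2 + m^2 := by positivity
  have hsa : ((r^2+m^2 : ℝ) : EReal) < a := lt_of_le_of_lt (EReal.coe_le_coe_iff.mpr hs) hx0a
  have hM1 : MemI a (r^2+m^2) := memI_of_abs (by rw [abs_of_nonneg hsnn]) hsa
  have hM2 : MemI a (r*p+m*q) := by rw [ht]; exact memI_of_abs hyabs.le hxa
  have hM3 : MemI a (r*p-m*q) := by rw [hu]; exact hc
  have hM4 : MemI a (p^2+q^2) := by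
    rw [hpq]; exact memI_of_abs (le_of_eq (abs_of_pos hxpos)) hxa
  have hM5 : MemI a (p^2-q^2) := by
    rw [hpq2]; exact memI_of_abs (by rw [abs_of_pos hv0]; exact hvx.le) hxa
  have hk : ∀ k : ℝ, 0 ≤ k^2 * f (r^2+m^2) + 2*k*(f y - f c) + 2*(f x - f v) := by
    intro k
    have hkey := sPos_key h p q r m hM1 hM2 hM3 hM4 hM5 k
    rwa [ht, hu, hpq, hpq2] at hkey
  have hfs0 : 0 ≤ f (r^2+m^2) := sPos_nonneg h hsnn hsa
  have hqb := quad_bound hfs0 hk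
  have hfs : f (r^2+m^2) ≤ F := sPos_mono h hsnn hs hx0a
  have hE0 : 0 ≤ f x - f v := by linarith
  have hηeq : (2*F+1)*η = ε^2 := by
    rw [hη]
    field_simp
  have hlt : (f y - f c)^2 < ε^2 := by
    calc (f y - f c)^2 ≤ 2 * f (r^2+m^2) * (f x - f v) := hqb
    _ ≤ 2 * F * (f x - f v) := mul_le_mul_of_nonneg_right (by linarith) hE0
    _ ≤ 2 * F * η := mul_le_mul_of_nonneg_left hfv.le (by linarith)
    _ < ε^2 := by linarith
  have habs : |f y - f c|^2 < ε^2 := by rwa [sq_abs]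
  exact lt_of_pow_lt_pow_left₀ 2 hε.le habs
end

section
/- Let 0 < α ≤ ∞ and let f be a real function on (-α,α). If f is S-monotone of order 3, then f is continuously differentiable on (-α,α). -/
open Matrix

private lemma memI_of_abs_le {a : EReal} {β : ℝ} (hβ : (β : EReal) < a) {z : ℝ} (hz : |z| ≤ β) :
    MemI a z := by
  have h1 : (z : EReal) ≤ (β : EReal) := by exact_mod_cast (abs_le.1 hz).2
  have h2 : ((-β : ℝ) : EReal) ≤ (z : EReal) := by exact_mod_cast (abs_le.1 hz).1
  refine ⟨lt_of_lt_of_le ?_ h2, lt_of_le_of_lt h1 hβ⟩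
  rw [EReal.coe_neg]
  exact EReal.neg_lt_neg_iff.2 hβ

private lemma smono_mono {a : EReal} {f : ℝ → ℝ} (h : SMono a f 3) {β x y : ℝ}
    (hβ : (β : EReal) < a) (hy : 0 ≤ y) (hyx : y ≤ x) (hxβ : x ≤ β) : f y ≤ f x := by
  have hβ0 : (0:ℝ) ≤ β := le_trans (hy.trans hyx) hxβ
  have m0 : MemI a 0 := memI_of_abs_le hβ (by simpa using hβ0)
  have mx : MemI a x := memI_of_abs_le hβ (abs_le.2 ⟨by linarith, hxβ⟩)
  have my : MemI a y := memI_of_abs_le hβ (abs_le.2 ⟨by linarith, by linarith⟩)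
  set A : Matrix (Fin 3) (Fin 3) ℝ := Matrix.of ![![x,0,0],![0,0,0],![0,0,0]] with hA
  set B : Matrix (Fin 3) (Fin 3) ℝ := Matrix.of ![![y,0,0],![0,0,0],![0,0,0]] with hB
  have hEA : EntriesIn a A := by
    intro i j
    fin_cases i <;> fin_cases j <;> first | exact mx | exact m0
  have hEB : EntriesIn a B := by
    intro i j
    fin_cases i <;> fin_cases j <;> first | exact my | exact m0
  have hAs : A.IsSymm := by
    unfold Matrix.IsSymm
    ext i j
    fin_cases i <;> fin_cases j <;> rfl
  have hBs : B.IsSymm := by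
    unfold Matrix.IsSymm
    ext i j
    fin_cases i <;> fin_cases j <;> rfl
  have hBpsd : B.PosSemidef := by
    refine Matrix.posSemidef_iff_dotProduct_mulVec.2 ⟨by rw [Matrix.IsHermitian]; ext i j; fin_cases i <;> fin_cases j <;> rfl, ?_⟩
    intro v
    simp [hB, dotProduct, Matrix.mulVec, Fin.sum_univ_three, Matrix.vecHead, Matrix.vecTail]
    nlinarith [sq_nonneg (v 0), hy]
  have hABpsd : (A - B).PosSemidef := by
    refine Matrix.posSemidef_iff_dotProduct_mulVec.2 ⟨by rw [Matrix.IsHermitian]; ext i j; fin_cases i <;> fin_cases j <;> rfl, ?_⟩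
    intro v
    simp [hA, hB, dotProduct, Matrix.mulVec, Fin.sum_univ_three, Matrix.vecHead, Matrix.vecTail, Matrix.sub_apply]
    nlinarith [sq_nonneg (v 0)]
  have key := (Matrix.posSemidef_iff_dotProduct_mulVec.1 (h A B hAs hBs hEA hEB hBpsd hABpsd)).2 ![1, 0, 0]
  simp [hA, hB, dotProduct, Matrix.mulVec, Fin.sum_univ_three, Matrix.vecHead, Matrix.vecTail, Matrix.sub_apply,
    Matrix.map_apply] at key
  linarith

private lemma master {a : EReal} {f : ℝ → ℝ} (h : SMono a f 3) {β b y p p' q : ℝ}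
    (hβ : (β : EReal) < a) (hb0 : 0 ≤ b) (hbβ : b ≤ β) (hyb : |y| ≤ b)
    (d1 : |b + p^2| ≤ β) (d2 : |b + p'^2| ≤ β) (d3 : |b + q^2| ≤ β) (d4 : |b + p*p'| ≤ β)
    (d5 : |y + p*q| ≤ β) (d6 : |y + p'*q| ≤ β) :
    ∀ lam mu : ℝ, 0 ≤ lam^2*(f (b+p^2) - f b) + mu^2*(f (b+p'^2) - f b) + (f (b+q^2) - f b)
      + 2*lam*mu*(f (b+p*p') - f b) + 2*lam*(f (y+p*q) - f y) + 2*mu*(f (y+p'*q) - f y) := by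
  intro lam mu
  have hyb' := abs_le.1 hyb
  have db : |b| ≤ β := abs_le.2 ⟨by linarith, hbβ⟩
  have dy : |y| ≤ β := hyb.trans hbβ
  set B : Matrix (Fin 3) (Fin 3) ℝ := Matrix.of ![![b,b,y],![b,b,y],![y,y,b]] with hB
  set A : Matrix (Fin 3) (Fin 3) ℝ :=
    Matrix.of ![![b+p^2, b+p*p', y+p*q],![b+p*p', b+p'^2, y+p'*q],![y+p*q, y+p'*q, b+q^2]] with hA
  have hEA : EntriesIn a A := by
    intro i j
    fin_cases i <;> fin_cases j <;>
      first
        | exact memI_of_abs_le hβ d1 | exact memI_of_abs_le hβ d2 | exact memI_of_abs_le hβ d3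
        | exact memI_of_abs_le hβ d4 | exact memI_of_abs_le hβ d5 | exact memI_of_abs_le hβ d6
  have hEB : EntriesIn a B := by
    intro i j
    fin_cases i <;> fin_cases j <;>
      first | exact memI_of_abs_le hβ db | exact memI_of_abs_le hβ dy
  have hAs : A.IsSymm := by
    unfold Matrix.IsSymm
    ext i j
    fin_cases i <;> fin_cases j <;> rfl
  have hBs : B.IsSymm := by
    unfold Matrix.IsSymm
    ext i j
    fin_cases i <;> fin_cases j <;> rfl
  have hBpsd : B.PosSemidef := by
    refine Matrix.posSemidef_iff_dotProduct_mulVec.2 ⟨by rw [Matrix.IsHermitian]; ext i j; fin_cases i <;> fin_cases j <;> rfl, ?_⟩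
    intro v
    simp [hB, dotProduct, Matrix.mulVec, Fin.sum_univ_three, Matrix.vecHead, Matrix.vecTail]
    nlinarith [mul_nonneg (by linarith : (0:ℝ) ≤ b - y) (sq_nonneg (v 0 + v 1 - v 2)),
      mul_nonneg (by linarith : (0:ℝ) ≤ b + y) (sq_nonneg (v 0 + v 1 + v 2))]
  have hABpsd : (A - B).PosSemidef := by
    refine Matrix.posSemidef_iff_dotProduct_mulVec.2 ⟨by rw [Matrix.IsHermitian]; ext i j; fin_cases i <;> fin_cases j <;> rfl, ?_⟩
    intro v
    simp [hA, hB, dotProduct, Matrix.mulVec, Fin.sum_univ_three, Matrix.vecHead,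
      Matrix.vecTail, Matrix.sub_apply]
    nlinarith [sq_nonneg (p * v 0 + p' * v 1 + q * v 2)]
  have key := (Matrix.posSemidef_iff_dotProduct_mulVec.1 (h A B hAs hBs hEA hEB hBpsd hABpsd)).2 ![lam, mu, 1]
  simp [hA, hB, dotProduct, Matrix.mulVec, Fin.sum_univ_three, Matrix.vecHead,
    Matrix.vecTail, Matrix.sub_apply, Matrix.map_apply] at key
  nlinarith [key]

private lemma aux_sq_le {s w : ℝ} (hw : 0 ≤ w) (h : |s| ≤ w) : s^2 ≤ w^2 := by
  nlinarith [abs_nonneg s, sq_abs s]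

private lemma aux_div_sq {s q0 m : ℝ} (hq0 : 0 < q0) (h : s^2 ≤ q0^2 * m) : (s/q0)^2 ≤ m := by
  rw [div_pow, div_le_iff₀ (by positivity)]
  linarith

private lemma aux_abs_mul {p p' m : ℝ} (h1 : p^2 ≤ m) (h2 : p'^2 ≤ m) : |p * p'| ≤ m := by
  rw [abs_mul]
  nlinarith [sq_nonneg (|p| - |p'|), sq_abs p, sq_abs p', abs_nonneg p, abs_nonneg p']

private lemma aux_pos_of_sq {q0 z : ℝ} (hq0 : 0 < q0) (h : q0^2 ≤ z) : 0 < z := by nlinarith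

private lemma aux_discrim {G K C : ℝ} (h : (2*G)^2 - 4*K*C ≤ 0) : G^2 ≤ K*C := by nlinarith

private lemma aux_eps {q0 C ε : ℝ} (hq0 : 0 < q0) (hC : 0 ≤ C) (hε : 0 < ε) :
    4*(ε^2*q0^2/(4*(C+1)))/q0^2 * C ≤ ε^2 := by
  have h3 : (0:ℝ) < C+1 := by linarith
  have key : 4*(ε^2*q0^2/(4*(C+1)))/q0^2*C = ε^2 * (C/(C+1)) := by
    field_simp
  rw [key]
  have h4 : C/(C+1) ≤ 1 := (div_le_one h3).2 (by linarith)
  nlinarith [sq_nonneg ε]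

private lemma aux_abs_of_sq {G ε : ℝ} (hε : 0 < ε) (h : G^2 ≤ ε^2) : |G| ≤ ε := by
  rw [abs_le]
  constructor <;> nlinarith

private lemma key_est {f : ℝ → ℝ} {β b r d q0 C : ℝ}
    (hr : 0 < r) (hrb : r < b) (hbβ : b < β)
    (hq0 : 0 < q0) (hq0sq1 : q0^2 ≤ (β - b)/2) (hq0sq2 : q0^2 ≤ b)
    (hC : 0 ≤ C)
    (SL : ∀ ε : ℝ, 0 < ε → ∃ δ : ℝ, 0 < δ ∧ ∀ t : ℝ, t ≠ 0 → |t| < δ →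
      |(f (b + t) - f b)/t - d| ≤ ε)
    (MASTER : ∀ y p p' : ℝ, |y| ≤ b → |b + p^2| ≤ β → |b + p'^2| ≤ β → |b + q0^2| ≤ β →
      |b + p*p'| ≤ β → |y + p*q0| ≤ β → |y + p'*q0| ≤ β →
      ∀ lam mu : ℝ, 0 ≤ lam^2*(f (b+p^2) - f b) + mu^2*(f (b+p'^2) - f b) + (f (b+q0^2) - f b)
        + 2*lam*mu*(f (b+p*p') - f b) + 2*lam*(f (y+p*q0) - f y) + 2*mu*(f (y+p'*q0) - f y))
    (hCdef : C = f (b + q0^2) - f b)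
    {ε : ℝ} (hε : 0 < ε) :
    ∃ h₀ : ℝ, 0 < h₀ ∧ ∀ y s s' : ℝ, |y| ≤ r → s ≠ 0 → |s| ≤ h₀ →
      s' ≠ 0 → |s'| ≤ h₀ →
      |(f (y + s) - f y)/s - (f (y + s') - f y)/s'| ≤ ε := by
  have hb0 : (0:ℝ) ≤ b := le_trans (le_of_lt hr) (le_of_lt hrb)
  have hβ0 : (0:ℝ) ≤ β := le_trans hb0 (le_of_lt hbβ)
  set ε' : ℝ := ε^2*q0^2/(4*(C+1)) with hε'def
  have hε' : 0 < ε' := div_pos (by positivity) (by linarith)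
  obtain ⟨δ, hδ, hSL⟩ := SL ε' hε'
  set m : ℝ := min (δ/2) (min b ((β - b)/2)) with hmdef
  have hbb : (0:ℝ) < b := lt_of_le_of_lt (le_of_lt hr) hrb
  have hβb : (0:ℝ) < (β - b)/2 := aux_pos_of_sq hq0 hq0sq1
  have hm : 0 < m := lt_min (by linarith) (lt_min hbb hβb)
  have hm1 : m < δ := lt_of_le_of_lt (min_le_left _ _) (by linarith)
  have hm2 : m ≤ b := le_trans (min_le_right _ _) (min_le_left _ _)
  have hm3 : m ≤ (β - b)/2 := le_trans (min_le_right _ _) (min_le_right _ _)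
  obtain ⟨sm, hsmpos, hsmsq⟩ : ∃ sm : ℝ, 0 < sm ∧ sm^2 = m :=
    ⟨Real.sqrt m, Real.sqrt_pos.2 hm, Real.sq_sqrt (le_of_lt hm)⟩
  have hβr : 0 < β - r := by linarith
  refine ⟨min (q0 * sm) (β - r), lt_min (by positivity) hβr, ?_⟩
  intro y s s' hy hs hsb hs'0 hs'b
  have hq0ne : q0 ≠ 0 := ne_of_gt hq0
  have hsp : s = (s/q0) * q0 := by field_simp
  have hsp' : s' = (s'/q0) * q0 := by field_simp
  set p : ℝ := s/q0 with hpdef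
  set p' : ℝ := s'/q0 with hp'def
  have hp : p ≠ 0 := fun hp0 => hs (by rw [hsp, hp0, zero_mul])
  have hp' : p' ≠ 0 := fun hp0 => hs'0 (by rw [hsp', hp0, zero_mul])
  have hsm : s^2 ≤ q0^2 * m := by
    have h1 : |s| ≤ q0 * sm := le_trans hsb (min_le_left _ _)
    have h3 := aux_sq_le (by positivity) h1
    rw [mul_pow, hsmsq] at h3
    exact h3
  have hs'm : s'^2 ≤ q0^2 * m := by
    have h1 : |s'| ≤ q0 * sm := le_trans hs'b (min_le_left _ _)
    have h3 := aux_sq_le (by positivity) h1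
    rw [mul_pow, hsmsq] at h3
    exact h3
  have hpm : p^2 ≤ m := aux_div_sq hq0 hsm
  have hp'm : p'^2 ≤ m := aux_div_sq hq0 hs'm
  have hppm : |p * p'| ≤ m := aux_abs_mul hpm hp'm
  have hppm' := abs_le.1 hppm
  have hsr : |s| ≤ β - r := le_trans hsb (min_le_right _ _)
  have hs'r : |s'| ≤ β - r := le_trans hs'b (min_le_right _ _)
  have d1 : |b + p^2| ≤ β := abs_le.2 ⟨by linarith [sq_nonneg p], by linarith [hpm, hm3]⟩
  have d2 : |b + p'^2| ≤ β := abs_le.2 ⟨by linarith [sq_nonneg p'], by linarith [hp'm, hm3]⟩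
  have d3 : |b + q0^2| ≤ β := abs_le.2 ⟨by linarith [sq_nonneg q0], by linarith⟩
  have d4 : |b + p*p'| ≤ β := abs_le.2 ⟨by linarith, by linarith⟩
  have hyr := abs_le.1 hy
  have hsr' := abs_le.1 hsr
  have hs'r' := abs_le.1 hs'r
  have d5 : |y + p*q0| ≤ β := by
    rw [← hsp]; exact abs_le.2 ⟨by linarith, by linarith⟩
  have d6 : |y + p'*q0| ≤ β := by
    rw [← hsp']; exact abs_le.2 ⟨by linarith, by linarith⟩
  have hyb : |y| ≤ b := le_trans hy (le_of_lt hrb)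
  have MM := MASTER y p p' hyb d1 d2 d3 d4 d5 d6
  have hp2 : p^2 ≠ 0 := pow_ne_zero 2 hp
  have hp'2 : p'^2 ≠ 0 := pow_ne_zero 2 hp'
  have hpp'0 : p * p' ≠ 0 := mul_ne_zero hp hp'
  set E1 : ℝ := (f (b + p^2) - f b)/p^2 - d with hE1def
  set E2 : ℝ := (f (b + p'^2) - f b)/p'^2 - d with hE2def
  set E3 : ℝ := (f (b + p*p') - f b)/(p*p') - d with hE3def
  have hE1 : |E1| ≤ ε' := by
    have := hSL (p^2) hp2 (by rw [abs_of_nonneg (sq_nonneg p)]; linarith)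
    simpa [hE1def] using this
  have hE2 : |E2| ≤ ε' := by
    have := hSL (p'^2) hp'2 (by rw [abs_of_nonneg (sq_nonneg p')]; linarith)
    simpa [hE2def] using this
  have hE3 : |E3| ≤ ε' := by
    have := hSL (p*p') hpp'0 (by linarith)
    simpa [hE3def] using this
  have hfp : f (b + p^2) - f b = p^2*(d + E1) := by rw [hE1def]; field_simp; ring
  have hfp' : f (b + p'^2) - f b = p'^2*(d + E2) := by rw [hE2def]; field_simp; ring
  have hfm : f (b + p*p') - f b = (p*p')*(d + E3) := by rw [hE3def]; field_simp; ring
  have hfy : f (y + p*q0) - f y = s * ((f (y + s) - f y)/s) := by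
    rw [← hsp]; field_simp
  have hfy' : f (y + p'*q0) - f y = s' * ((f (y + s') - f y)/s') := by
    rw [← hsp']; field_simp
  set G : ℝ := (f (y + s) - f y)/s - (f (y + s') - f y)/s' with hGdef
  set K : ℝ := (E1 + E2 - 2*E3)/q0^2 with hKdef
  have quad : ∀ τ : ℝ, 0 ≤ K * (τ * τ) + (2*G) * τ + C := by
    intro τ
    have hMM := MM (τ/s) (-(τ/s'))
    rw [hfp, hfp', hfm, hfy, hfy'] at hMM
    have heq : (τ/s)^2*(p^2*(d + E1)) + (-(τ/s'))^2*(p'^2*(d + E2)) + (f (b+q0^2) - f b)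
        + 2*(τ/s)*(-(τ/s'))*((p*p')*(d + E3)) + 2*(τ/s)*(s * ((f (y + s) - f y)/s))
        + 2*(-(τ/s'))*(s' * ((f (y + s') - f y)/s')) = K * (τ * τ) + (2*G) * τ + C := by
      rw [hKdef, hGdef, ← hCdef, hpdef, hp'def]
      field_simp
      ring
    rw [heq] at hMM
    exact hMM
  have hdis := discrim_le_zero quad
  rw [discrim] at hdis
  have hKb : K ≤ 4*ε'/q0^2 := by
    rw [hKdef, div_le_div_iff₀ (by positivity) (by positivity)]
    have e1 := abs_le.1 hE1
    have e2 := abs_le.1 hE2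
    have e3 := abs_le.1 hE3
    have hq2 : (0:ℝ) ≤ q0^2 := sq_nonneg q0
    have hlin : E1 + E2 - 2*E3 ≤ 4*ε' := by linarith
    calc (E1 + E2 - 2*E3) * q0^2 ≤ (4*ε') * q0^2 := mul_le_mul_of_nonneg_right hlin hq2
      _ = 4*ε'*q0^2 := by ring
  have h1 : G^2 ≤ K * C := aux_discrim (by linarith)
  have h2 : K * C ≤ (4*ε'/q0^2) * C := mul_le_mul_of_nonneg_right hKb hC
  have h3 : (4*ε'/q0^2) * C ≤ ε^2 := by
    rw [hε'def]
    have := aux_eps (C := C) (ε := ε) hq0 hC hε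
    calc 4*(ε^2*q0^2/(4*(C+1)))/q0^2 * C = 4*(ε^2*q0^2/(4*(C+1)))/q0^2 * C := rfl
      _ ≤ ε^2 := this
  have hG2 : G^2 ≤ ε^2 := by linarith
  rw [hGdef] at hG2
  exact aux_abs_of_sq hε hG2

private lemma window {a : EReal} {f : ℝ → ℝ} (h : SMono a f 3) {r : ℝ}
    (hr : 0 < r) (hra : (r : EReal) < a) :
    (∀ y, |y| ≤ r → DifferentiableAt ℝ f y) ∧ (∀ y, |y| < r → ContinuousAt (deriv f) y) := by
  classical
  obtain ⟨β, hrβE, hβ⟩ := EReal.lt_iff_exists_real_btwn.1 hra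
  have hrβ : r < β := by exact_mod_cast hrβE
  have hβ0 : (0:ℝ) ≤ β := by linarith
  -- monotone clamp of f
  set F : ℝ → ℝ := fun x => f (min (max x 0) β) with hF
  have hFmono : Monotone F := by
    intro u v huv
    have h1 : (0:ℝ) ≤ min (max u 0) β := le_min (le_max_right u 0) hβ0
    have h2 : min (max u 0) β ≤ min (max v 0) β :=
      min_le_min (max_le_max huv (le_refl 0)) (le_refl β)
    have h3 : min (max v 0) β ≤ β := min_le_right _ _
    exact smono_mono h hβ h1 h2 h3
  -- a differentiability point b of f in (r, β)
  obtain ⟨b, hbI, hFb⟩ : ∃ b ∈ Set.Ioo r β, DifferentiableAt ℝ F b := by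
    by_contra hcon
    push_neg at hcon
    have hsub : Set.Ioo r β ⊆ {x | ¬ DifferentiableAt ℝ F x} := fun x hx => hcon x hx
    have h0 : MeasureTheory.volume (Set.Ioo r β) = 0 :=
      MeasureTheory.measure_mono_null hsub
        (by simpa [MeasureTheory.ae_iff] using hFmono.ae_differentiableAt)
    rw [Real.volume_Ioo, ENNReal.ofReal_eq_zero] at h0
    linarith
  have hrb : r < b := hbI.1
  have hbβ : b < β := hbI.2
  have hb0 : (0:ℝ) ≤ b := by linarith
  have hfb : DifferentiableAt ℝ f b := by
    have hFf : F =ᶠ[nhds b] f := by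
      filter_upwards [Ioo_mem_nhds (show (0:ℝ) < b by linarith) hbβ] with x hx
      simp only [hF]
      rw [max_eq_left (le_of_lt hx.1), min_eq_left (le_of_lt hx.2)]
    exact hFf.differentiableAt_iff.1 hFb
  set d : ℝ := deriv f b with hd
  have hdd : HasDerivAt f d b := hfb.hasDerivAt
  -- quantitative slope control at b
  have SL : ∀ ε : ℝ, 0 < ε → ∃ δ : ℝ, 0 < δ ∧ ∀ t : ℝ, t ≠ 0 → |t| < δ →
      |(f (b + t) - f b)/t - d| ≤ ε := by
    intro ε hε
    have hts := hasDerivAt_iff_tendsto_slope.1 hdd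
    rw [Metric.tendsto_nhdsWithin_nhds] at hts
    obtain ⟨δ, hδ, hδ'⟩ := hts ε hε
    refine ⟨δ, hδ, ?_⟩
    intro t ht htδ
    have hx : b + t ∈ ({b}ᶜ : Set ℝ) := by simp [ht]
    have h2 := hδ' hx (by simpa [Real.dist_eq] using htδ)
    rw [Real.dist_eq, slope_def_field] at h2
    have h3 : b + t - b = t := by ring
    rw [h3] at h2
    exact le_of_lt h2
  -- fixed scale q0 and constant C
  have hminpos : 0 < min ((β - b)/2) b := lt_min (by linarith) (by linarith)
  obtain ⟨q0, hq0, hq0sq⟩ : ∃ q0 : ℝ, 0 < q0 ∧ q0^2 = min ((β - b)/2) b :=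
    ⟨Real.sqrt (min ((β - b)/2) b), Real.sqrt_pos.2 hminpos, Real.sq_sqrt (le_of_lt hminpos)⟩
  have hq0sq1 : q0^2 ≤ (β - b)/2 := by rw [hq0sq]; exact min_le_left _ _
  have hq0sq2 : q0^2 ≤ b := by rw [hq0sq]; exact min_le_right _ _
  set C : ℝ := f (b + q0^2) - f b with hCdef
  have hC : 0 ≤ C := by
    have := smono_mono h hβ hb0 (by nlinarith : b ≤ b + q0^2) (by linarith : b + q0^2 ≤ β)
    rw [hCdef]; linarith
  -- the master inequality
  have MASTER : ∀ y p p' : ℝ, |y| ≤ b → |b + p^2| ≤ β → |b + p'^2| ≤ β → |b + q0^2| ≤ β →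
      |b + p*p'| ≤ β → |y + p*q0| ≤ β → |y + p'*q0| ≤ β →
      ∀ lam mu : ℝ, 0 ≤ lam^2*(f (b+p^2) - f b) + mu^2*(f (b+p'^2) - f b) + (f (b+q0^2) - f b)
        + 2*lam*mu*(f (b+p*p') - f b) + 2*lam*(f (y+p*q0) - f y) + 2*mu*(f (y+p'*q0) - f y) :=
    fun y p p' hyb d1 d2 d3 d4 d5 d6 =>
      master h hβ hb0 (le_of_lt hbβ) hyb d1 d2 d3 d4 d5 d6
  -- the key uniform Cauchy estimate
  have KEY : ∀ ε : ℝ, 0 < ε → ∃ h₀ : ℝ, 0 < h₀ ∧ ∀ y s s' : ℝ, |y| ≤ r → s ≠ 0 → |s| ≤ h₀ →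
      s' ≠ 0 → |s'| ≤ h₀ →
      |(f (y + s) - f y)/s - (f (y + s') - f y)/s'| ≤ ε := by
    intro ε hε
    exact key_est hr hrb hbβ hq0 hq0sq1 hq0sq2 hC SL MASTER hCdef hε
  -- existence of limits of slopes
  have EXL : ∀ y : ℝ, |y| ≤ r → ∃ l : ℝ,
      Filter.Tendsto (fun s => (f (y + s) - f y)/s) (nhdsWithin (0:ℝ) {(0:ℝ)}ᶜ) (nhds l) := by
    intro y hy
    have hcauchy : Cauchy (Filter.map (fun s => (f (y + s) - f y)/s)
        (nhdsWithin (0:ℝ) {(0:ℝ)}ᶜ)) := by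
      rw [Metric.cauchy_iff]
      constructor
      · exact Filter.map_neBot
      · intro ε hε
        obtain ⟨h₀, hh₀, hk⟩ := KEY (ε/2) (by linarith)
        refine ⟨(fun s => (f (y + s) - f y)/s) '' {s : ℝ | s ≠ 0 ∧ |s| ≤ h₀}, ?_, ?_⟩
        · apply Filter.image_mem_map
          have h1 : Metric.closedBall (0:ℝ) h₀ ∈ nhds (0:ℝ) := Metric.closedBall_mem_nhds _ hh₀
          have h2 : {s : ℝ | s ≠ 0 ∧ |s| ≤ h₀} =
              {(0:ℝ)}ᶜ ∩ Metric.closedBall (0:ℝ) h₀ := by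
            ext s
            simp [Real.dist_eq, and_comm]
          rw [h2]
          exact Filter.inter_mem self_mem_nhdsWithin (mem_nhdsWithin_of_mem_nhds h1)
        · rintro u ⟨su, ⟨hsu0, hsub⟩, rfl⟩ v ⟨sv, ⟨hsv0, hsvb⟩, rfl⟩
          rw [Real.dist_eq]
          exact lt_of_le_of_lt (hk y su sv hy hsu0 hsub hsv0 hsvb) (by linarith)
    obtain ⟨l, hl⟩ := CompleteSpace.complete hcauchy
    exact ⟨l, hl⟩
  choose! D hD using EXL
  -- uniform approximation of D by slopes
  have UNIF : ∀ ε : ℝ, 0 < ε → ∃ h₀ : ℝ, 0 < h₀ ∧ ∀ y s : ℝ, |y| ≤ r → s ≠ 0 → |s| ≤ h₀ →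
      |(f (y + s) - f y)/s - D y| ≤ ε := by
    intro ε hε
    obtain ⟨h₀, hh₀, hk⟩ := KEY ε hε
    refine ⟨h₀, hh₀, ?_⟩
    intro y s hy hs hsb
    have htend : Filter.Tendsto (fun s' => |(f (y + s) - f y)/s - (f (y + s') - f y)/s'|)
        (nhdsWithin (0:ℝ) {(0:ℝ)}ᶜ) (nhds |(f (y + s) - f y)/s - D y|) :=
      Filter.Tendsto.abs (Filter.Tendsto.sub tendsto_const_nhds (hD y hy))
    have hev : ∀ᶠ s' in nhdsWithin (0:ℝ) {(0:ℝ)}ᶜ,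
        |(f (y + s) - f y)/s - (f (y + s') - f y)/s'| ≤ ε := by
      have h1 : Metric.closedBall (0:ℝ) h₀ ∈ nhds (0:ℝ) := Metric.closedBall_mem_nhds _ hh₀
      filter_upwards [self_mem_nhdsWithin, mem_nhdsWithin_of_mem_nhds h1] with s' hs'0 hs'b
      have hs'0' : s' ≠ 0 := hs'0
      have hs'b' : |s'| ≤ h₀ := by
        rw [Metric.mem_closedBall, Real.dist_eq, sub_zero] at hs'b
        exact hs'b
      exact hk y s s' hy hs hsb hs'0' hs'b'
    exact le_of_tendsto htend hev
  -- derivative everywhere on the window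
  have HAS : ∀ y : ℝ, |y| ≤ r → HasDerivAt f (D y) y := by
    intro y hy
    rw [hasDerivAt_iff_tendsto_slope_zero]
    refine (hD y hy).congr ?_
    intro t
    rw [smul_eq_mul, div_eq_inv_mul]
  refine ⟨fun y hy => (HAS y hy).differentiableAt, ?_⟩
  -- continuity of the derivative
  intro y₀ hy₀
  have hDeq : deriv f =ᶠ[nhds y₀] D := by
    have hopen : {y : ℝ | |y| < r} ∈ nhds y₀ := by
      have : IsOpen {y : ℝ | |y| < r} := by
        have : {y : ℝ | |y| < r} = Metric.ball (0:ℝ) r := by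
          ext y; simp [Real.dist_eq]
        rw [this]; exact Metric.isOpen_ball
      exact this.mem_nhds hy₀
    filter_upwards [hopen] with y hy
    exact (HAS y (le_of_lt hy)).deriv
  have hDcont : ContinuousAt D y₀ := by
    rw [Metric.continuousAt_iff]
    intro ε hε
    obtain ⟨h₀, hh₀, hu⟩ := UNIF (ε/4) (by linarith)
    set s : ℝ := min h₀ ((r - |y₀|)/2) with hsdef
    have hrm : 0 < (r - |y₀|)/2 := by
      have := hy₀; linarith [abs_nonneg y₀]
    have hs0 : 0 < s := lt_min hh₀ hrm
    have hsne : s ≠ 0 := ne_of_gt hs0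
    have hsh₀ : |s| ≤ h₀ := by
      rw [abs_of_pos hs0]; exact min_le_left _ _
    have hsr2 : s ≤ (r - |y₀|)/2 := min_le_right _ _
    -- continuity of the slope at scale s near y₀
    have hfc1 : ContinuousAt f y₀ :=
      (HAS y₀ (le_of_lt hy₀)).differentiableAt.continuousAt
    have hfc2 : ContinuousAt f (y₀ + s) := by
      apply DifferentiableAt.continuousAt (𝕜 := ℝ)
      apply (HAS (y₀ + s) ?_).differentiableAt
      have := abs_le.1 (abs_abs y₀ ▸ le_refl |y₀|)
      rw [abs_le]
      constructor
      · linarith [abs_le.1 (le_refl |y₀| ), neg_abs_le y₀]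
      · linarith [le_abs_self y₀]
    have hadd : ContinuousAt (fun y : ℝ => y + s) y₀ := by fun_prop
    have hcomp : ContinuousAt (fun y => f (y + s)) y₀ :=
      ContinuousAt.comp (x := y₀) (g := f) (f := fun y : ℝ => y + s) hfc2 hadd
    have hgc : ContinuousAt (fun y => (f (y + s) - f y)/s) y₀ :=
      ContinuousAt.div_const (hcomp.sub hfc1) s
    rw [Metric.continuousAt_iff] at hgc
    obtain ⟨δ', hδ', hgc'⟩ := hgc (ε/4) (by linarith)
    refine ⟨min δ' ((r - |y₀|)/2), lt_min hδ' hrm, ?_⟩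
    intro y hyd
    rw [Real.dist_eq] at hyd
    have hyd1 : |y - y₀| < δ' := lt_of_lt_of_le hyd (min_le_left _ _)
    have hyd2 : |y - y₀| ≤ (r - |y₀|)/2 := le_of_lt (lt_of_lt_of_le hyd (min_le_right _ _))
    have hyr : |y| ≤ r := by
      have h1 := abs_le.1 hyd2
      have h2 := abs_le.1 (le_refl |y₀|)
      rw [abs_le]
      constructor
      · linarith [neg_abs_le y₀]
      · linarith [le_abs_self y₀]
    have e1 : |(f (y + s) - f y)/s - D y| ≤ ε/4 := hu y s hyr hsne hsh₀
    have e2 : |(f (y₀ + s) - f y₀)/s - D y₀| ≤ ε/4 := hu y₀ s (le_of_lt hy₀) hsne hsh₀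
    have e3 : |(f (y + s) - f y)/s - (f (y₀ + s) - f y₀)/s| < ε/4 := by
      have h5 := hgc' (show dist y y₀ < δ' by rw [Real.dist_eq]; exact hyd1)
      rw [Real.dist_eq] at h5
      exact h5
    rw [Real.dist_eq]
    have t1 : |D y - D y₀| ≤ |D y - (f (y + s) - f y)/s| +
        |(f (y + s) - f y)/s - D y₀| := abs_sub_le _ _ _
    have t2 : |(f (y + s) - f y)/s - D y₀| ≤
        |(f (y + s) - f y)/s - (f (y₀ + s) - f y₀)/s| +
        |(f (y₀ + s) - f y₀)/s - D y₀| := abs_sub_le _ _ _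
    have t3 : |D y - (f (y + s) - f y)/s| = |(f (y + s) - f y)/s - D y| := abs_sub_comm _ _
    linarith
  exact hDcont.congr hDeq.symm

/-- Proposition 2.6: if `f` is S-monotone of order 3 on `(-α, α)`, then `f` is continuously
differentiable on `(-α, α)`. -/
theorem stmt_6 (a : EReal) (ha : 0 < a) (f : ℝ → ℝ) (h : SMono a f 3) :
    (∀ x, MemI a x → DifferentiableAt ℝ f x) ∧
    ContinuousOn (deriv f) {x | MemI a x} := by
  have main : ∀ x : ℝ, MemI a x → DifferentiableAt ℝ f x ∧ ContinuousAt (deriv f) x := by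
    intro x hx
    have habs : ((|x| : ℝ) : EReal) < a := by
      rcases abs_cases x with ⟨he, _⟩ | ⟨he, _⟩
      · rw [he]; exact hx.2
      · rw [he, EReal.coe_neg]
        exact EReal.neg_lt_of_neg_lt hx.1
    obtain ⟨c, hc1, hc2⟩ := EReal.lt_iff_exists_real_btwn.1 habs
    have hc1' : |x| < c := by exact_mod_cast hc1
    have hc0 : (0:ℝ) < c := lt_of_le_of_lt (abs_nonneg x) hc1'
    obtain ⟨HD, HC⟩ := window h hc0 hc2
    exact ⟨HD x (le_of_lt hc1'), HC x hc1'⟩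
  exact ⟨fun x hx => (main x hx).1,
    fun x hx => ((main x hx).2).continuousWithinAt⟩
end

section
/- Let 0 < α ≤ ∞, n ∈ ℕ with n ≥ 1, and let f be a real function on (-α,α). If f is S-positive of order 2n, then f is S-monotone of order n; and if f is S-monotone of order 2n, then f is S-convex of order n. -/
open Matrix

/-! ### Auxiliary lemmas -/

section Aux

lemma memI_zero {a : EReal} (ha : 0 < a) : MemI a 0 := by
  constructor
  · have : -a < -0 := EReal.neg_lt_neg_iff.mpr (by simpa using ha)
    simpa using this
  · simpa using ha

lemma memI_combo {a : EReal} {x y : ℝ} (hx : MemI a x) (hy : MemI a y)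
    {t : ℝ} (ht0 : 0 ≤ t) (ht1 : t ≤ 1) : MemI a (t * x + (1 - t) * y) := by
  obtain ⟨hx1, hx2⟩ := hx
  obtain ⟨hy1, hy2⟩ := hy
  constructor
  · have h1 : min x y ≤ t * x + (1 - t) * y := by
      nlinarith [min_le_left x y, min_le_right x y]
    have h2 : -a < ((min x y : ℝ) : EReal) := by
      rcases min_cases x y with ⟨h, _⟩ | ⟨h, _⟩ <;> rw [h] <;> assumption
    exact lt_of_lt_of_le h2 (EReal.coe_le_coe_iff.mpr h1)
  · have h1 : t * x + (1 - t) * y ≤ max x y := by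
      nlinarith [le_max_left x y, le_max_right x y]
    have h2 : ((max x y : ℝ) : EReal) < a := by
      rcases max_cases x y with ⟨h, _⟩ | ⟨h, _⟩ <;> rw [h] <;> assumption
    exact lt_of_le_of_lt (EReal.coe_le_coe_iff.mpr h1) h2

lemma isHermitian_of_isSymm {m : Type*} {M : Matrix m m ℝ} (h : M.IsSymm) :
    M.IsHermitian := by
  rw [Matrix.IsHermitian, conjTranspose_eq_transpose_of_trivial]
  exact h

lemma posSemidef_of_forall {m : Type*} [Fintype m] {M : Matrix m m ℝ} (h1 : M.IsHermitian)
    (h2 : ∀ x, 0 ≤ x ⬝ᵥ (M *ᵥ x)) : M.PosSemidef :=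
  .of_dotProduct_mulVec_nonneg h1 fun x => by simpa using h2 x

lemma posSemidef_qf {m : Type*} [Fintype m] {M : Matrix m m ℝ} (h : M.PosSemidef)
    (x : m → ℝ) : 0 ≤ x ⬝ᵥ (M *ᵥ x) := by simpa using h.dotProduct_mulVec_nonneg x

lemma psd_smul {m : Type*} [Fintype m] {M : Matrix m m ℝ} (h : M.PosSemidef)
    {c : ℝ} (hc : 0 ≤ c) : (c • M).PosSemidef := by
  refine posSemidef_of_forall ?_ ?_
  · have := h.isHermitian
    rw [Matrix.IsHermitian, conjTranspose_smul, this]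
    simp
  · intro x
    rw [smul_mulVec, dotProduct_smul]
    exact mul_nonneg hc (posSemidef_qf h x)

variable {n : ℕ}

lemma quad_fromBlocks (P Q R S : Matrix (Fin n) (Fin n) ℝ) (x y : Fin n → ℝ) :
    Sum.elim x y ⬝ᵥ (fromBlocks P Q R S *ᵥ Sum.elim x y)
      = x ⬝ᵥ (P *ᵥ x) + x ⬝ᵥ (Q *ᵥ y) + y ⬝ᵥ (R *ᵥ x) + y ⬝ᵥ (S *ᵥ y) := by
  rw [fromBlocks_mulVec, sumElim_dotProduct_sumElim, dotProduct_add, dotProduct_add]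
  simp only [Sum.elim_comp_inl, Sum.elim_comp_inr]
  ring

lemma psd_all {X : Matrix (Fin n) (Fin n) ℝ} (hX : X.PosSemidef) :
    (fromBlocks X X X X).PosSemidef := by
  refine posSemidef_of_forall ?_ ?_
  · rw [Matrix.IsHermitian, fromBlocks_conjTranspose, hX.isHermitian]
  · intro x
    rw [← Sum.elim_comp_inl_inr x, quad_fromBlocks]
    have h := posSemidef_qf hX (x ∘ Sum.inl + x ∘ Sum.inr)
    rw [mulVec_add, dotProduct_add, add_dotProduct, add_dotProduct] at h
    linarith

lemma psd_diag {X Y : Matrix (Fin n) (Fin n) ℝ} (hX : X.PosSemidef) (hY : Y.PosSemidef) :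
    (fromBlocks X 0 0 Y).PosSemidef := by
  refine posSemidef_of_forall ?_ ?_
  · rw [Matrix.IsHermitian, fromBlocks_conjTranspose, hX.isHermitian, hY.isHermitian,
      conjTranspose_zero]
  · intro x
    rw [← Sum.elim_comp_inl_inr x, quad_fromBlocks]
    have h1 := posSemidef_qf hX (x ∘ Sum.inl)
    have h2 := posSemidef_qf hY (x ∘ Sum.inr)
    simp only [zero_mulVec, dotProduct_zero]
    linarith

/-- The index equivalence used to pass between `Fin n ⊕ Fin n` and `Fin (2 * n)`. -/
def eqv (n : ℕ) : (Fin n ⊕ Fin n) ≃ Fin (2 * n) :=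
  finSumFinEquiv.trans (finCongr (two_mul n).symm)

/-- A `2n × 2n` matrix built from four `n × n` blocks. -/
def Big (P Q R S : Matrix (Fin n) (Fin n) ℝ) : Matrix (Fin (2 * n)) (Fin (2 * n)) ℝ :=
  (fromBlocks P Q R S).submatrix (eqv n).symm (eqv n).symm

lemma big_psd_iff {P Q R S : Matrix (Fin n) (Fin n) ℝ} :
    (Big P Q R S).PosSemidef ↔ (fromBlocks P Q R S).PosSemidef :=
  posSemidef_submatrix_equiv (eqv n).symm

lemma big_entriesIn {a : EReal} {P Q R S : Matrix (Fin n) (Fin n) ℝ}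
    (hP : EntriesIn a P) (hQ : EntriesIn a Q) (hR : EntriesIn a R) (hS : EntriesIn a S) :
    EntriesIn a (Big P Q R S) := by
  intro i j
  show MemI a (fromBlocks P Q R S ((eqv n).symm i) ((eqv n).symm j))
  cases hi : (eqv n).symm i <;> cases hj : (eqv n).symm j <;>
    simp only [fromBlocks_apply₁₁, fromBlocks_apply₁₂, fromBlocks_apply₂₁, fromBlocks_apply₂₂] <;>
    first | exact hP _ _ | exact hQ _ _ | exact hR _ _ | exact hS _ _

lemma big_isSymm {P Q R S : Matrix (Fin n) (Fin n) ℝ}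
    (hP : P.IsSymm) (hS : S.IsSymm) (hQR : Qᵀ = R) : (Big P Q R S).IsSymm := by
  show _ᵀ = _
  rw [Big, transpose_submatrix, fromBlocks_transpose, hP, hS, hQR, ← hQR, transpose_transpose]

lemma big_map (P Q R S : Matrix (Fin n) (Fin n) ℝ) (φ : ℝ → ℝ) :
    (Big P Q R S).map φ = Big (P.map φ) (Q.map φ) (R.map φ) (S.map φ) := by
  rw [Big, Big, ← fromBlocks_map, submatrix_map]

lemma big_sub (P Q R S P' Q' R' S' : Matrix (Fin n) (Fin n) ℝ) :
    Big P Q R S - Big P' Q' R' S' = Big (P - P') (Q - Q') (R - R') (S - S') := by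
  ext i j
  simp only [Matrix.sub_apply, Matrix.add_apply, Big, submatrix_apply]
  cases (eqv n).symm i <;> cases (eqv n).symm j <;> simp [fromBlocks]

lemma big_add (P Q R S P' Q' R' S' : Matrix (Fin n) (Fin n) ℝ) :
    Big P Q R S + Big P' Q' R' S' = Big (P + P') (Q + Q') (R + R') (S + S') := by
  ext i j
  simp only [Matrix.sub_apply, Matrix.add_apply, Big, submatrix_apply]
  cases (eqv n).symm i <;> cases (eqv n).symm j <;> simp [fromBlocks]

end Aux

section Core

variable {n : ℕ} {a : EReal} {f : ℝ → ℝ}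

/-- S-positivity of order `2n` implies S-monotonicity of order `n`. -/
lemma spos_to_smono (h : SPos a f (2 * n)) : SMono a f n := by
  intro A B hA hB hAe hBe hBpsd hABpsd
  have hsplit : fromBlocks A B B B = fromBlocks B B B B + fromBlocks (A - B) 0 0 0 := by
    ext i j
    cases i <;> cases j <;> simp [fromBlocks]
  have hBigPsd : (Big A B B B).PosSemidef := by
    rw [big_psd_iff, hsplit]
    exact ((psd_all hBpsd).add (psd_diag hABpsd .zero))
  have hBigE : EntriesIn a (Big A B B B) := big_entriesIn hAe hBe hBe hBe
  have hmap := h _ hBigE hBigPsd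
  rw [big_map] at hmap
  have hq := big_psd_iff.mp hmap
  refine posSemidef_of_forall (isHermitian_of_isSymm ((hA.map f).sub (hB.map f))) ?_
  intro v
  have h0 := posSemidef_qf hq (Sum.elim v (-v))
  rw [quad_fromBlocks] at h0
  rw [sub_mulVec, dotProduct_sub]
  simp only [mulVec_neg, dotProduct_neg, neg_dotProduct, neg_neg] at h0
  linarith

/-- S-monotonicity of order `2n` implies S-monotonicity of order `n`. -/
lemma smono_reduce (ha : 0 < a) (h : SMono a f (2 * n)) : SMono a f n := by
  intro A B hA hB hAe hBe hBpsd hABpsd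
  have h0 : EntriesIn a (0 : Matrix (Fin n) (Fin n) ℝ) := fun i j => by
    simpa using memI_zero ha
  have hAbig : (Big A 0 0 A).IsSymm := big_isSymm hA hA (by simp)
  have hBbig : (Big B 0 0 B).IsSymm := big_isSymm hB hB (by simp)
  have hsub : Big A 0 0 A - Big B 0 0 B = Big (A - B) 0 0 (A - B) := by
    rw [big_sub]; simp
  have key := h (Big A 0 0 A) (Big B 0 0 B) hAbig hBbig
    (big_entriesIn hAe h0 h0 hAe) (big_entriesIn hBe h0 h0 hBe)
    (big_psd_iff.mpr (psd_diag hBpsd hBpsd))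
    (by rw [hsub]; exact big_psd_iff.mpr (psd_diag hABpsd hABpsd))
  rw [big_map, big_map, big_sub] at key
  have hq := big_psd_iff.mp key
  refine posSemidef_of_forall (isHermitian_of_isSymm ((hA.map f).sub (hB.map f))) ?_
  intro v
  have h0' := posSemidef_qf hq (Sum.elim v 0)
  rw [quad_fromBlocks] at h0'
  simpa using h0'

/-- Midpoint convexity inequality from S-monotonicity of order `2n`. -/
lemma midpoint_qf (hm : SMono a f (2 * n)) {A B : Matrix (Fin n) (Fin n) ℝ}
    (hA : A.IsSymm) (hB : B.IsSymm) (hAe : EntriesIn a A) (hBe : EntriesIn a B)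
    (hBpsd : B.PosSemidef) (hABpsd : (A - B).PosSemidef) (v : Fin n → ℝ) :
    2 * (v ⬝ᵥ (((2⁻¹ : ℝ) • A + (2⁻¹ : ℝ) • B).map f *ᵥ v))
      ≤ v ⬝ᵥ (A.map f *ᵥ v) + v ⬝ᵥ (B.map f *ᵥ v) := by
  set C : Matrix (Fin n) (Fin n) ℝ := (2⁻¹ : ℝ) • A + (2⁻¹ : ℝ) • B with hC
  have hCsymm : C.IsSymm := (hA.smul _).add (hB.smul _)
  have hCe : EntriesIn a C := by
    intro i j
    have := memI_combo (hAe i j) (hBe i j) (t := 2⁻¹) (by norm_num) (by norm_num)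
    have heq : C i j = 2⁻¹ * A i j + (1 - 2⁻¹) * B i j := by
      simp only [hC, Matrix.add_apply, Matrix.smul_apply, smul_eq_mul]
      ring
    rwa [heq]
  have hD : (((2⁻¹ : ℝ)) • (A - B)).PosSemidef := psd_smul hABpsd (by norm_num)
  have hAC : A - C = (2⁻¹ : ℝ) • (A - B) := by
    ext i j
    simp only [hC, Matrix.sub_apply, Matrix.add_apply, Matrix.smul_apply, smul_eq_mul]
    ring
  have hCB : C - B = (2⁻¹ : ℝ) • (A - B) := by
    ext i j
    simp only [hC, Matrix.sub_apply, Matrix.add_apply, Matrix.smul_apply, smul_eq_mul]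
    ring
  have hsplit : fromBlocks C B B B = fromBlocks B B B B + fromBlocks (C - B) 0 0 0 := by
    ext i j; cases i <;> cases j <;> simp [fromBlocks]
  have hBtil : (Big C B B B).PosSemidef := by
    rw [big_psd_iff, hsplit]
    exact (psd_all hBpsd).add (by rw [hCB]; exact psd_diag hD .zero)
  have hsub : Big A C C C - Big C B B B
      = Big ((2⁻¹ : ℝ) • (A - B)) ((2⁻¹ : ℝ) • (A - B)) ((2⁻¹ : ℝ) • (A - B))
          ((2⁻¹ : ℝ) • (A - B)) := by
    rw [big_sub, hAC, hCB]
  have key := hm (Big A C C C) (Big C B B B)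
    (big_isSymm hA hCsymm hCsymm) (big_isSymm hCsymm hB hB)
    (big_entriesIn hAe hCe hCe hCe) (big_entriesIn hCe hBe hBe hBe)
    hBtil (by rw [hsub]; exact big_psd_iff.mpr (psd_all hD))
  rw [big_map, big_map, big_sub] at key
  have hq := big_psd_iff.mp key
  have h0 := posSemidef_qf hq (Sum.elim v (-v))
  rw [quad_fromBlocks] at h0
  simp only [sub_mulVec, dotProduct_sub, mulVec_neg, dotProduct_neg, neg_dotProduct,
    neg_neg, neg_sub] at h0
  linarith

end Core

section Scalar

/-- Dyadic convexity from midpoint convexity. -/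
lemma dyadic_step {F : ℝ → ℝ}
    (hmid : ∀ s t : ℝ, 0 ≤ s → s ≤ t → t ≤ 1 → 2 * F ((s + t) / 2) ≤ F s + F t) :
    ∀ k : ℕ, ∀ j : ℕ, j ≤ 2 ^ k →
      F ((j : ℝ) / 2 ^ k) ≤ ((j : ℝ) / 2 ^ k) * F 1 + (1 - (j : ℝ) / 2 ^ k) * F 0 := by
  intro k
  induction k with
  | zero =>
    intro j hj
    interval_cases j <;> norm_num
  | succ k ih =>
    intro j hj
    have h2k : (0 : ℝ) < 2 ^ k := by positivity
    rcases Nat.even_or_odd j with ⟨m, hm⟩ | ⟨m, hm⟩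
    · subst hm
      have hm2 : m ≤ 2 ^ k := by
        have : 2 ^ (k + 1) = 2 * 2 ^ k := by ring
        omega
      have hcast : ((m + m : ℕ) : ℝ) / 2 ^ (k + 1) = (m : ℝ) / 2 ^ k := by
        push_cast
        rw [pow_succ]
        field_simp
        ring
      rw [hcast]
      exact ih m hm2
    · subst hm
      have hm2 : m + 1 ≤ 2 ^ k := by
        have : 2 ^ (k + 1) = 2 * 2 ^ k := by ring
        omega
      have key : ((2 * m + 1 : ℕ) : ℝ) / 2 ^ (k + 1)
          = ((m : ℝ) / 2 ^ k + ((m : ℝ) + 1) / 2 ^ k) / 2 := by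
        push_cast
        rw [pow_succ]
        field_simp
        ring
      have h0 : (0 : ℝ) ≤ (m : ℝ) / 2 ^ k := by positivity
      have hle : (m : ℝ) / 2 ^ k ≤ ((m : ℝ) + 1) / 2 ^ k := by
        gcongr
        linarith
      have h1 : ((m : ℝ) + 1) / 2 ^ k ≤ 1 := by
        rw [div_le_one h2k]
        have : ((m + 1 : ℕ) : ℝ) ≤ ((2 ^ k : ℕ) : ℝ) := by exact_mod_cast hm2
        push_cast at this
        linarith
      have hmid' := hmid _ _ h0 hle h1
      have i1 := ih m (by omega)
      have i2 := ih (m + 1) hm2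
      push_cast at i2
      rw [key]
      linarith

/-- Monotone + midpoint convex implies the endpoint convexity inequality. -/
lemma convex_endpoint {F : ℝ → ℝ}
    (hmono : ∀ s t : ℝ, 0 ≤ s → s ≤ t → t ≤ 1 → F s ≤ F t)
    (hmid : ∀ s t : ℝ, 0 ≤ s → s ≤ t → t ≤ 1 → 2 * F ((s + t) / 2) ≤ F s + F t)
    {t : ℝ} (ht0 : 0 ≤ t) (ht1 : t ≤ 1) :
    F t ≤ t * F 1 + (1 - t) * F 0 := by
  rcases eq_or_lt_of_le ht1 with rfl | ht1'
  · simp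
  have hK : 0 ≤ F 1 - F 0 := by
    have := hmono 0 1 le_rfl zero_le_one le_rfl
    linarith
  set K : ℝ := F 1 - F 0 with hKdef
  refine le_of_forall_pos_le_add ?_
  intro ε hε
  obtain ⟨k, hk⟩ := pow_unbounded_of_one_lt
    (max (1 / (1 - t)) ((K + 1) / ε)) (by norm_num : (1:ℝ) < 2)
  have h2k : (0 : ℝ) < 2 ^ k := by positivity
  have hk1 : 1 / (1 - t) < 2 ^ k := lt_of_le_of_lt (le_max_left _ _) hk
  have hk2 : (K + 1) / ε < 2 ^ k := lt_of_le_of_lt (le_max_right _ _) hk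
  have h1t : (1 : ℝ) / 2 ^ k < 1 - t := by
    rw [div_lt_iff₀ (by linarith : (0:ℝ) < 1 - t)] at hk1
    rw [div_lt_iff₀ h2k]
    nlinarith
  have hKeps : K / 2 ^ k < ε := by
    rw [div_lt_iff₀ hε] at hk2
    rw [div_lt_iff₀ h2k]
    nlinarith
  set j : ℕ := ⌈t * 2 ^ k⌉₊ with hj
  have hjle : j ≤ 2 ^ k := by
    rw [hj, Nat.ceil_le]
    push_cast
    nlinarith
  have htd : t ≤ (j : ℝ) / 2 ^ k := by
    rw [le_div_iff₀ h2k]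
    exact Nat.le_ceil _
  have hdt : (j : ℝ) / 2 ^ k < t + 1 / 2 ^ k := by
    rw [div_lt_iff₀ h2k]
    have := Nat.ceil_lt_add_one (by positivity : (0:ℝ) ≤ t * 2 ^ k)
    calc (j : ℝ) < t * 2 ^ k + 1 := this
    _ = (t + 1 / 2 ^ k) * 2 ^ k := by field_simp
  have hd1 : (j : ℝ) / 2 ^ k ≤ 1 := by
    rw [div_le_one h2k]
    calc (j : ℝ) ≤ ((2 ^ k : ℕ) : ℝ) := by exact_mod_cast hjle
    _ = 2 ^ k := by push_cast; ring
  have step1 : F t ≤ F ((j : ℝ) / 2 ^ k) := hmono t _ ht0 htd hd1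
  have step2 := dyadic_step hmid k j hjle
  have expand : ((j : ℝ) / 2 ^ k) * F 1 + (1 - (j : ℝ) / 2 ^ k) * F 0
      = t * F 1 + (1 - t) * F 0 + ((j : ℝ) / 2 ^ k - t) * K := by
    rw [hKdef]; ring
  have hbound : ((j : ℝ) / 2 ^ k - t) * K ≤ ε := by
    have hd : (j : ℝ) / 2 ^ k - t < 1 / 2 ^ k := by linarith
    have : ((j : ℝ) / 2 ^ k - t) * K ≤ (1 / 2 ^ k) * K := by
      apply mul_le_mul_of_nonneg_right (le_of_lt hd) hK
    have h2 : (1 / 2 ^ k) * K < ε ∨ K = 0 := by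
      rcases eq_or_lt_of_le hK with h | h
      · right; linarith
      · left
        calc (1 / 2 ^ k) * K = K / 2 ^ k := by ring
        _ < ε := hKeps
    rcases h2 with h2 | h2
    · linarith
    · rw [h2] at this ⊢
      simp at this ⊢
      linarith
  linarith

end Scalar

/-- Proposition 3.1: S-positivity of order `2n` implies S-monotonicity of order `n`, and
S-monotonicity of order `2n` implies S-convexity of order `n`. -/
theorem stmt_7 (a : EReal) (ha : 0 < a) (n : ℕ) (hn : 1 ≤ n) (f : ℝ → ℝ) :
    (SPos a f (2 * n) → SMono a f n) ∧ (SMono a f (2 * n) → SConv a f n) := by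
  constructor
  · exact fun h => spos_to_smono h
  · intro hm A B hA hB hAe hBe hBpsd hABpsd t ht0 ht1
    have hmono_n : SMono a f n := smono_reduce ha hm
    set Ct : ℝ → Matrix (Fin n) (Fin n) ℝ := fun s => s • A + (1 - s) • B with hCt
    have hCsymm : ∀ s : ℝ, (Ct s).IsSymm := fun s => (hA.smul _).add (hB.smul _)
    have hCe : ∀ s : ℝ, 0 ≤ s → s ≤ 1 → EntriesIn a (Ct s) := by
      intro s hs0 hs1 i j
      have h := memI_combo (hAe i j) (hBe i j) hs0 hs1
      have heq : Ct s i j = s * A i j + (1 - s) * B i j := by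
        simp only [hCt, Matrix.add_apply, Matrix.smul_apply, smul_eq_mul]
      rwa [heq]
    have hCsub : ∀ s u : ℝ, Ct u - Ct s = (u - s) • (A - B) := by
      intro s u; ext i j
      simp only [hCt, Matrix.sub_apply, Matrix.add_apply, Matrix.smul_apply, smul_eq_mul]
      ring
    have hCpsd : ∀ s : ℝ, 0 ≤ s → (Ct s).PosSemidef := by
      intro s hs
      have heq : Ct s = B + s • (A - B) := by
        ext i j
        simp only [hCt, Matrix.add_apply, Matrix.sub_apply, Matrix.smul_apply, smul_eq_mul]
        ring
      rw [heq]
      exact hBpsd.add (psd_smul hABpsd hs)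
    refine posSemidef_of_forall ?_ ?_
    · refine isHermitian_of_isSymm (Matrix.IsSymm.sub (Matrix.IsSymm.add ?_ ?_) ?_)
      · exact (hA.map f).smul t
      · exact (hB.map f).smul (1 - t)
      · exact (hCsymm t).map f
    · intro v
      set F : ℝ → ℝ := fun s => v ⬝ᵥ ((Ct s).map f *ᵥ v) with hF
      have hmonoF : ∀ s u : ℝ, 0 ≤ s → s ≤ u → u ≤ 1 → F s ≤ F u := by
        intro s u hs hsu hu1
        have key := hmono_n (Ct u) (Ct s) (hCsymm u) (hCsymm s) (hCe u (by linarith) hu1)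
          (hCe s hs (by linarith)) (hCpsd s hs)
          (by rw [hCsub]; exact psd_smul hABpsd (by linarith))
        have h2 := posSemidef_qf key v
        rw [sub_mulVec, dotProduct_sub] at h2
        simp only [hF]
        linarith
      have hmidF : ∀ s u : ℝ, 0 ≤ s → s ≤ u → u ≤ 1 → 2 * F ((s + u) / 2) ≤ F s + F u := by
        intro s u hs hsu hu1
        have key := midpoint_qf hm (hCsymm u) (hCsymm s) (hCe u (by linarith) hu1)
          (hCe s hs (by linarith)) (hCpsd s hs)
          (by rw [hCsub]; exact psd_smul hABpsd (by linarith)) v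
        have hmid_eq : (2⁻¹ : ℝ) • Ct u + (2⁻¹ : ℝ) • Ct s = Ct ((s + u) / 2) := by
          ext i j
          simp only [hCt, Matrix.add_apply, Matrix.smul_apply, smul_eq_mul]
          ring
        rw [hmid_eq] at key
        simp only [hF]
        linarith
      have hend := convex_endpoint hmonoF hmidF ht0 ht1
      have hC1 : Ct 1 = A := by
        ext i j
        simp only [hCt, Matrix.add_apply, Matrix.smul_apply, smul_eq_mul]
        ring
      have hC0 : Ct 0 = B := by
        ext i j
        simp only [hCt, Matrix.add_apply, Matrix.smul_apply, smul_eq_mul]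
        ring
      have e1 : F 1 = v ⬝ᵥ (A.map f *ᵥ v) := by rw [hF]; simp only; rw [hC1]
      have e0 : F 0 = v ⬝ᵥ (B.map f *ᵥ v) := by rw [hF]; simp only; rw [hC0]
      have eFt : F t = v ⬝ᵥ ((t • A + (1 - t) • B).map f *ᵥ v) := rfl
      rw [sub_mulVec, dotProduct_sub, add_mulVec, dotProduct_add,
        smul_mulVec, smul_mulVec, dotProduct_smul, dotProduct_smul]
      rw [e1, e0, eFt] at hend
      simp only [smul_eq_mul]
      linarith
end

section
/- Let 0 < α ≤ ∞, n ∈ ℕ with n ≥ 2, and let f be a real function on (-α,α). Then f is S-convex of order n if and only if f is differentiable on (-α,α) and its derivative f' is S-monotone of order n. -/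
open Matrix Set Filter Topology

/-- EReal helper: `|y| ≤ x` and `x < a` implies `y ∈ (-a,a)`. -/
lemma aux_memI_of_abs_le {a : EReal} {x y : ℝ} (h : |y| ≤ x) (hx : (x:EReal) < a) : MemI a y := by
  have h1 : -x ≤ y := neg_le_of_abs_le h
  have h2 : y ≤ x := le_of_abs_le h
  constructor
  · have : -a < ((-x : ℝ) : EReal) := by
      rw [EReal.coe_neg]
      exact EReal.neg_lt_neg_iff.mpr hx
    exact lt_of_lt_of_le this (EReal.coe_le_coe_iff.mpr h1)
  · exact lt_of_le_of_lt (EReal.coe_le_coe_iff.mpr h2) hx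

lemma aux_abs_lt {a : EReal} {x : ℝ} (h : MemI a x) : ((|x| : ℝ) : EReal) < a := by
  rcases abs_cases x with ⟨he, _⟩ | ⟨he, _⟩
  · rw [he]; exact h.2
  · rw [he, EReal.coe_neg]
    exact EReal.neg_lt_neg_iff.mpr h.1 |>.trans_eq (neg_neg _) |> (fun h => h)

lemma aux_exists_r {a : EReal} {x : ℝ} (hx : (x:EReal) < a) :
    ∃ r : ℝ, 0 < r ∧ ((x + r : ℝ) : EReal) < a := by
  induction a with
  | bot => exact absurd hx (by simp)
  | coe b =>
    refine ⟨(b - x)/2, by linarith [EReal.coe_lt_coe_iff.mp hx], ?_⟩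
    rw [EReal.coe_lt_coe_iff]
    linarith [EReal.coe_lt_coe_iff.mp hx]
  | top => exact ⟨1, one_pos, EReal.coe_lt_top _⟩

lemma aux_memI_combo {a : EReal} {x y t : ℝ} (hx : MemI a x) (hy : MemI a y)
    (ht0 : 0 ≤ t) (ht1 : t ≤ 1) : MemI a (t*x + (1-t)*y) := by
  have key : |t*x + (1-t)*y| ≤ t*|x| + (1-t)*|y| := by
    refine (abs_add_le _ _).trans (le_of_eq ?_)
    rw [abs_mul, abs_mul, abs_of_nonneg ht0, abs_of_nonneg (by linarith : (0:ℝ) ≤ 1 - t)]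
  rcases le_total (|x|) (|y|) with hc | hc
  · refine aux_memI_of_abs_le (key.trans ?_) (aux_abs_lt hy)
    nlinarith [abs_nonneg x, abs_nonneg y]
  · refine aux_memI_of_abs_le (key.trans ?_) (aux_abs_lt hx)
    nlinarith [abs_nonneg x, abs_nonneg y]

-- Matrix helpers

lemma aux_isHermitian_of_isSymm {n : ℕ} {A : Matrix (Fin n) (Fin n) ℝ} (h : A.IsSymm) :
    A.IsHermitian := by
  unfold Matrix.IsHermitian
  ext i j
  rw [conjTranspose_apply, star_trivial]
  exact congrFun (congrFun h i) j

lemma aux_posSemidef_of_quad {n : ℕ} {A : Matrix (Fin n) (Fin n) ℝ} (h : A.IsSymm)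
    (hq : ∀ v : Fin n → ℝ, 0 ≤ v ⬝ᵥ (A *ᵥ v)) : A.PosSemidef := by
  exact .of_dotProduct_mulVec_nonneg (aux_isHermitian_of_isSymm h) (fun v => by simpa using hq v)

lemma aux_quad_nonneg {n : ℕ} {A : Matrix (Fin n) (Fin n) ℝ} (h : A.PosSemidef)
    (v : Fin n → ℝ) : 0 ≤ v ⬝ᵥ (A *ᵥ v) := by
  simpa using h.dotProduct_mulVec_nonneg v

/-- Schur product theorem over ℝ. -/
lemma aux_schur {n : ℕ} {M N : Matrix (Fin n) (Fin n) ℝ} (hM : M.PosSemidef)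
    (hN : N.PosSemidef) : Matrix.PosSemidef (Matrix.of fun i j => M i j * N i j) := by
  obtain ⟨m, B, hB⟩ := Matrix.posSemidef_iff_eq_sum_vecMulVec.mp hM
  have hMe : ∀ i j, M i j = ∑ k, B k i * B k j := by
    intro i j
    rw [hB]
    simp [Matrix.sum_apply, vecMulVec_apply]
  refine aux_posSemidef_of_quad ?_ (fun v => ?_)
  · unfold Matrix.IsSymm
    ext i j
    rw [transpose_apply]
    simp only [of_apply]
    have h1 : Mᴴ i j = M i j := congrFun (congrFun hM.1 i) j
    have h2 : Nᴴ i j = N i j := congrFun (congrFun hN.1 i) j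
    rw [conjTranspose_apply, star_trivial] at h1 h2
    rw [h1, h2]
  · have expand : v ⬝ᵥ ((Matrix.of fun i j => M i j * N i j) *ᵥ v)
        = ∑ k, (fun i => B k i * v i) ⬝ᵥ (N *ᵥ fun i => B k i * v i) := by
      simp only [dotProduct, mulVec, of_apply]
      calc ∑ i, v i * ∑ j, M i j * N i j * v j
          = ∑ i, ∑ j, ∑ k, (B k i * v i) * (N i j * (B k j * v j)) := by
            refine Finset.sum_congr rfl (fun i _ => ?_)
            rw [Finset.mul_sum]
            refine Finset.sum_congr rfl (fun j _ => ?_)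
            have hr : v i * (M i j * N i j * v j) = M i j * (N i j * (v i * v j)) := by ring
            rw [hr, hMe i j, Finset.sum_mul]
            exact Finset.sum_congr rfl (fun k _ => by ring)
        _ = ∑ i, ∑ k, ∑ j, (B k i * v i) * (N i j * (B k j * v j)) :=
            Finset.sum_congr rfl (fun i _ => Finset.sum_comm)
        _ = ∑ k, ∑ i, ∑ j, (B k i * v i) * (N i j * (B k j * v j)) := Finset.sum_comm
        _ = ∑ k, ∑ i, (B k i * v i) * ∑ j, N i j * (B k j * v j) := by
            refine Finset.sum_congr rfl (fun k _ => Finset.sum_congr rfl (fun i _ => ?_))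
            rw [Finset.mul_sum]
    rw [expand]
    exact Finset.sum_nonneg fun k _ => aux_quad_nonneg hN _

-- Section 3 : padded 2x2 construction

def auxW (n : ℕ) : Fin n → ℝ := fun i => if i.val = 0 then 1 else if i.val = 1 then 1 else 0
def auxZ (n : ℕ) : Fin n → ℝ := fun i => if i.val = 0 then 1 else if i.val = 1 then -1 else 0

def auxM (n : ℕ) (p q : ℝ) : Matrix (Fin n) (Fin n) ℝ :=
  p • vecMulVec (auxW n) (auxW n) + q • vecMulVec (auxZ n) (auxZ n)

lemma auxM_apply (n : ℕ) (p q : ℝ) (i j : Fin n) :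
    auxM n p q i j = p * (auxW n i * auxW n j) + q * (auxZ n i * auxZ n j) := by
  simp [auxM, vecMulVec_apply]

lemma auxM_symm (n : ℕ) (p q : ℝ) : (auxM n p q).IsSymm := by
  unfold Matrix.IsSymm
  ext i j
  rw [transpose_apply, auxM_apply, auxM_apply]
  ring

lemma aux_vecMulVec_mulVec {n : ℕ} (w v : Fin n → ℝ) :
    (vecMulVec w w) *ᵥ v = (w ⬝ᵥ v) • w := by
  ext i
  simp only [mulVec, vecMulVec_apply, dotProduct, Pi.smul_apply, smul_eq_mul, Finset.sum_mul]
  exact Finset.sum_congr rfl fun j _ => by ring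

lemma auxM_psd {n : ℕ} {p q : ℝ} (hp : 0 ≤ p) (hq : 0 ≤ q) : (auxM n p q).PosSemidef := by
  refine aux_posSemidef_of_quad (auxM_symm n p q) (fun v => ?_)
  unfold auxM
  rw [add_mulVec, dotProduct_add, smul_mulVec, smul_mulVec,
    dotProduct_smul, dotProduct_smul, aux_vecMulVec_mulVec, aux_vecMulVec_mulVec,
    dotProduct_smul]
  have h1 : auxW n ⬝ᵥ v = v ⬝ᵥ auxW n := dotProduct_comm _ _
  have h2 : auxZ n ⬝ᵥ v = v ⬝ᵥ auxZ n := dotProduct_comm _ _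
  simp only [smul_eq_mul, dotProduct_smul]
  rw [h1, h2]
  have := mul_self_nonneg (v ⬝ᵥ auxW n)
  have := mul_self_nonneg (v ⬝ᵥ auxZ n)
  nlinarith

lemma auxM_sub (n : ℕ) (p q p' q' : ℝ) :
    auxM n p q - auxM n p' q' = auxM n (p - p') (q - q') := by
  ext i j
  simp only [Matrix.sub_apply, auxM_apply]
  ring

lemma auxWZ_cases {n : ℕ} (k : Fin n) :
    (auxW n k = 1 ∧ auxZ n k = 1) ∨ (auxW n k = 1 ∧ auxZ n k = -1) ∨
      (auxW n k = 0 ∧ auxZ n k = 0) := by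
  unfold auxW auxZ
  by_cases h0 : k.val = 0
  · exact Or.inl ⟨by simp [h0], by simp [h0]⟩
  · by_cases h1 : k.val = 1
    · exact Or.inr (Or.inl ⟨by simp [h0, h1], by simp [h0, h1]⟩)
    · exact Or.inr (Or.inr ⟨by simp [h0, h1], by simp [h0, h1]⟩)

lemma auxM_cases (n : ℕ) (p q : ℝ) (i j : Fin n) :
    auxM n p q i j = p + q ∨ auxM n p q i j = p - q ∨ auxM n p q i j = 0 := by
  rw [auxM_apply]
  rcases auxWZ_cases i with ⟨e1, e2⟩ | ⟨e1, e2⟩ | ⟨e1, e2⟩ <;>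
    rcases auxWZ_cases j with ⟨f1, f2⟩ | ⟨f1, f2⟩ | ⟨f1, f2⟩ <;>
    rw [e1, e2, f1, f2] <;>
    first
      | (left; ring1)
      | (right; left; ring1)
      | (right; right; ring1)

lemma aux_sum_pair {n : ℕ} (hn : 2 ≤ n) (g : Fin n → ℝ)
    (h0 : ∀ i : Fin n, i.val ≠ 0 → i.val ≠ 1 → g i = 0) :
    ∑ i, g i = g ⟨0, by omega⟩ + g ⟨1, by omega⟩ := by
  classical
  have hne : (⟨0, by omega⟩ : Fin n) ≠ ⟨1, by omega⟩ := by
    intro h; simpa using congrArg Fin.val h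
  rw [← Finset.sum_pair hne]
  refine (Finset.sum_subset (Finset.subset_univ _) ?_).symm
  intro i _ hi
  simp only [Finset.mem_insert, Finset.mem_singleton] at hi
  push_neg at hi
  refine h0 i ?_ ?_
  · intro h; exact hi.1 (by ext; exact h)
  · intro h; exact hi.2 (by ext; exact h)

lemma aux_quadW {n : ℕ} (hn : 2 ≤ n) (N : Matrix (Fin n) (Fin n) ℝ) :
    auxW n ⬝ᵥ (N *ᵥ auxW n) =
      N ⟨0, by omega⟩ ⟨0, by omega⟩ + N ⟨0, by omega⟩ ⟨1, by omega⟩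
      + (N ⟨1, by omega⟩ ⟨0, by omega⟩ + N ⟨1, by omega⟩ ⟨1, by omega⟩) := by
  have inner : N *ᵥ auxW n = fun i => N i ⟨0, by omega⟩ + N i ⟨1, by omega⟩ := by
    ext i
    show ∑ j, N i j * auxW n j = _
    rw [aux_sum_pair hn _ (fun j hj0 hj1 => by simp [auxW, hj0, hj1])]
    simp [auxW]
  rw [inner]
  unfold dotProduct
  rw [aux_sum_pair hn _ (fun i hi0 hi1 => by simp [auxW, hi0, hi1])]
  simp [auxW]

lemma aux_quadZ {n : ℕ} (hn : 2 ≤ n) (N : Matrix (Fin n) (Fin n) ℝ) :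
    auxZ n ⬝ᵥ (N *ᵥ auxZ n) =
      N ⟨0, by omega⟩ ⟨0, by omega⟩ - N ⟨0, by omega⟩ ⟨1, by omega⟩
      - N ⟨1, by omega⟩ ⟨0, by omega⟩ + N ⟨1, by omega⟩ ⟨1, by omega⟩ := by
  have inner : N *ᵥ auxZ n = fun i => N i ⟨0, by omega⟩ - N i ⟨1, by omega⟩ := by
    ext i
    show ∑ j, N i j * auxZ n j = _
    rw [aux_sum_pair hn _ (fun j hj0 hj1 => by simp [auxZ, hj0, hj1])]
    simp [auxZ]
    ring
  rw [inner]
  unfold dotProduct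
  rw [aux_sum_pair hn _ (fun i hi0 hi1 => by simp [auxZ, hi0, hi1])]
  simp [auxZ]
  ring

lemma auxM_00 {n : ℕ} (hn : 2 ≤ n) (p q : ℝ) :
    auxM n p q ⟨0, by omega⟩ ⟨0, by omega⟩ = p + q := by
  rw [auxM_apply]; norm_num [auxW, auxZ]

lemma auxM_01 {n : ℕ} (hn : 2 ≤ n) (p q : ℝ) :
    auxM n p q ⟨0, by omega⟩ ⟨1, by omega⟩ = p - q := by
  rw [auxM_apply]; norm_num [auxW, auxZ]; ring

lemma auxM_10 {n : ℕ} (hn : 2 ≤ n) (p q : ℝ) :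
    auxM n p q ⟨1, by omega⟩ ⟨0, by omega⟩ = p - q := by
  rw [auxM_apply]; norm_num [auxW, auxZ]; ring

lemma auxM_11 {n : ℕ} (hn : 2 ≤ n) (p q : ℝ) :
    auxM n p q ⟨1, by omega⟩ ⟨1, by omega⟩ = p + q := by
  rw [auxM_apply]; norm_num [auxW, auxZ]

/-- The master inequality extracted from S-convexity via padded 2×2 matrices. -/
lemma aux_star {a : EReal} {n : ℕ} {f : ℝ → ℝ} (hn : 2 ≤ n) (hc : SConv a f n)
    {x y u v t : ℝ} (hy0 : 0 ≤ y) (hvy : |v| ≤ y) (hux : |u| ≤ x)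
    (huv : |u - v| ≤ x - y) (hxa : (x : EReal) < a) (ht0 : 0 ≤ t) (ht1 : t ≤ 1) :
    |t * f u + (1 - t) * f v - f (t * u + (1 - t) * v)| ≤
      t * f x + (1 - t) * f y - f (t * x + (1 - t) * y) := by
  have hx0 : 0 ≤ x := le_trans (abs_nonneg u) hux
  have hyx : y ≤ x := by have := abs_nonneg (u - v); linarith
  have hvx := abs_le.mp hvy
  have hux' := abs_le.mp hux
  have huv' := abs_le.mp huv
  set A := auxM n ((x+u)/2) ((x-u)/2) with hA
  set B := auxM n ((y+v)/2) ((y-v)/2) with hB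
  have hAe : EntriesIn a A := by
    intro i j
    rcases auxM_cases n ((x+u)/2) ((x-u)/2) i j with h | h | h <;> rw [hA, h]
    · have hx' : (x+u)/2 + (x-u)/2 = x := by ring
      rw [hx']
      exact aux_memI_of_abs_le (le_of_eq (abs_of_nonneg hx0)) hxa
    · have hu' : (x+u)/2 - (x-u)/2 = u := by ring
      rw [hu']
      exact aux_memI_of_abs_le hux hxa
    · exact aux_memI_of_abs_le (by simp [hx0]) hxa
  have hBe : EntriesIn a B := by
    intro i j
    rcases auxM_cases n ((y+v)/2) ((y-v)/2) i j with h | h | h <;> rw [hB, h]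
    · have hy' : (y+v)/2 + (y-v)/2 = y := by ring
      rw [hy']
      exact aux_memI_of_abs_le (by rw [abs_of_nonneg hy0]; exact hyx) hxa
    · have hv' : (y+v)/2 - (y-v)/2 = v := by ring
      rw [hv']
      exact aux_memI_of_abs_le (hvy.trans hyx) hxa
    · exact aux_memI_of_abs_le (by simp [hx0]) hxa
  have hB_psd : B.PosSemidef := auxM_psd (by linarith [hvx.1]) (by linarith [hvx.2])
  have hAB : (A - B).PosSemidef := by
    rw [hA, hB, auxM_sub]
    exact auxM_psd (by linarith [huv'.1]) (by linarith [huv'.2])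
  have key := hc A B (auxM_symm n _ _) (auxM_symm n _ _) hAe hBe hB_psd hAB t ht0 ht1
  set N := t • A.map f + (1 - t) • B.map f - (t • A + (1 - t) • B).map f with hNdef
  have hN : ∀ i j, N i j
      = t * f (A i j) + (1-t) * f (B i j) - f (t * A i j + (1-t) * B i j) := by
    intro i j
    simp [hNdef, Matrix.add_apply, Matrix.sub_apply, Matrix.smul_apply, Matrix.map_apply,
      smul_eq_mul]
  have hA00 : A ⟨0, by omega⟩ ⟨0, by omega⟩ = x := by rw [hA, auxM_00 hn]; ring
  have hA11 : A ⟨1, by omega⟩ ⟨1, by omega⟩ = x := by rw [hA, auxM_11 hn]; ring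
  have hA01 : A ⟨0, by omega⟩ ⟨1, by omega⟩ = u := by rw [hA, auxM_01 hn]; ring
  have hA10 : A ⟨1, by omega⟩ ⟨0, by omega⟩ = u := by rw [hA, auxM_10 hn]; ring
  have hB00 : B ⟨0, by omega⟩ ⟨0, by omega⟩ = y := by rw [hB, auxM_00 hn]; ring
  have hB11 : B ⟨1, by omega⟩ ⟨1, by omega⟩ = y := by rw [hB, auxM_11 hn]; ring
  have hB01 : B ⟨0, by omega⟩ ⟨1, by omega⟩ = v := by rw [hB, auxM_01 hn]; ring
  have hB10 : B ⟨1, by omega⟩ ⟨0, by omega⟩ = v := by rw [hB, auxM_10 hn]; ring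
  have hqW := aux_quad_nonneg key (auxW n)
  have hqZ := aux_quad_nonneg key (auxZ n)
  rw [aux_quadW hn] at hqW
  rw [aux_quadZ hn] at hqZ
  rw [hN, hN, hN, hN, hA00, hA01, hA10, hA11, hB00, hB01, hB10, hB11] at hqW hqZ
  refine abs_le.mpr ⟨by linarith, by linarith⟩

lemma aux_conv_pos {a : EReal} {n : ℕ} {f : ℝ → ℝ} (hn : 2 ≤ n) (hc : SConv a f n)
    {x y t : ℝ} (hy0 : 0 ≤ y) (hyx : y ≤ x) (hxa : (x : EReal) < a)
    (ht0 : 0 ≤ t) (ht1 : t ≤ 1) :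
    f (t * x + (1 - t) * y) ≤ t * f x + (1 - t) * f y := by
  have hx0 : 0 ≤ x := hy0.trans hyx
  have h := aux_star hn hc hy0 (le_of_eq (abs_of_nonneg hy0)) (le_of_eq (abs_of_nonneg hx0))
      (le_of_eq (abs_of_nonneg (by linarith : (0:ℝ) ≤ x - y))) hxa ht0 ht1
  have h0 := abs_nonneg (t * f x + (1 - t) * f y - f (t * x + (1 - t) * y))
  linarith

lemma aux_hasDeriv {a : EReal} {n : ℕ} {f : ℝ → ℝ} (hn : 2 ≤ n) (hc : SConv a f n)
    {c : ℝ} (hcI : MemI a c) : ∃ L, HasDerivAt f L c := by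
  obtain ⟨r0, hr0, hra0⟩ := aux_exists_r (aux_abs_lt hcI)
  set r : ℝ := r0 / 3 with hrdef
  have hr : 0 < r := by positivity
  set y0 : ℝ := |c| + r with hy0def
  have hy0 : 0 ≤ y0 := by positivity
  have hy0pos : 0 < y0 := by positivity
  have hxa : ∀ {d : ℝ}, d ≤ 2*r → ((y0 + d : ℝ) : EReal) < a := by
    intro d hd
    refine lt_of_le_of_lt (EReal.coe_le_coe_iff.mpr ?_) hra0
    simp only [hy0def, hrdef]; linarith
  set D : ℝ → ℝ := fun h => (f (c + h) - f c) / h with hDdef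
  set G : ℝ → ℝ := fun s => (f (y0 + s) - f y0) / s with hGdef
  -- G is monotone on (0, 2r)
  have hGmono : MonotoneOn G (Ioo 0 (2*r)) := by
    intro s1 hs1 s2 hs2 h12
    have hs1p : 0 < s1 := hs1.1
    have hs2p : 0 < s2 := hs2.1
    have ht0 : 0 ≤ s1/s2 := by positivity
    have ht1 : s1/s2 ≤ 1 := div_le_one_of_le₀ h12 hs2p.le
    have hcp := aux_conv_pos hn hc hy0 (by linarith : y0 ≤ y0 + s2) (hxa hs2.2.le) ht0 ht1
    have harg : (s1/s2) * (y0 + s2) + (1 - s1/s2) * y0 = y0 + s1 := by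
      field_simp
      ring
    rw [harg] at hcp
    show (f (y0 + s1) - f y0) / s1 ≤ (f (y0 + s2) - f y0) / s2
    rw [div_le_div_iff₀ hs1p hs2p]
    have hkey := mul_le_mul_of_nonneg_right hcp hs2p.le
    have expand : (s1/s2 * f (y0+s2) + (1 - s1/s2) * f y0) * s2
        = f (y0+s2) * s1 + f y0 * (s2 - s1) := by
      field_simp
    rw [expand] at hkey
    linarith
  -- G is bounded below
  set m0 : ℝ := (f y0 - f 0) / y0 with hm0def
  have hGbdd : ∀ s ∈ Ioo (0:ℝ) (2*r), m0 ≤ G s := by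
    intro s hs
    have hsp : 0 < s := hs.1
    have hyps : (0:ℝ) < y0 + s := by linarith
    have ht0 : 0 ≤ y0/(y0+s) := by positivity
    have ht1 : y0/(y0+s) ≤ 1 := div_le_one_of_le₀ (by linarith) hyps.le
    have hcp := aux_conv_pos hn hc le_rfl (by linarith : (0:ℝ) ≤ y0 + s) (hxa hs.2.le) ht0 ht1
    have harg : (y0/(y0+s)) * (y0 + s) + (1 - y0/(y0+s)) * 0 = y0 := by
      field_simp
      ring
    rw [harg] at hcp
    show m0 ≤ (f (y0 + s) - f y0) / s
    rw [hm0def, div_le_div_iff₀ hy0pos hsp]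
    have hkey := mul_le_mul_of_nonneg_right hcp hyps.le
    have expand : (y0/(y0+s) * f (y0+s) + (1 - y0/(y0+s)) * f 0) * (y0+s)
        = f (y0+s) * y0 + f 0 * s := by
      field_simp
      ring
    rw [expand] at hkey
    linarith
  -- key quotient bound
  have hQd : ∀ h d : ℝ, 0 < h → h ≤ d → d ≤ 2*r → |D h - D d| ≤ G d - G h := by
    intro h d hh hhd hd2r
    have hd : 0 < d := lt_of_lt_of_le hh hhd
    have ht0 : 0 ≤ h/d := by positivity
    have ht1 : h/d ≤ 1 := div_le_one_of_le₀ hhd hd.le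
    have hst := aux_star hn hc (u := c + d) (v := c) (x := y0 + d) (y := y0) (t := h/d)
      hy0 (by rw [hy0def]; linarith)
      ?_ ?_ (hxa hd2r) ht0 ht1
    · have harg1 : (h/d) * (c + d) + (1 - h/d) * c = c + h := by field_simp; ring
      have harg2 : (h/d) * (y0 + d) + (1 - h/d) * y0 = y0 + h := by field_simp; ring
      rw [harg1, harg2] at hst
      have hee1 : (h/d) * f (c + d) + (1 - h/d) * f c - f (c + h) = h * (D d - D h) := by
        rw [hDdef]; field_simp; ring
      have hee2 : (h/d) * f (y0 + d) + (1 - h/d) * f y0 - f (y0 + h) = h * (G d - G h) := by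
        rw [hGdef]; field_simp; ring
      rw [hee1, hee2, abs_mul, abs_of_pos hh] at hst
      rw [abs_sub_comm]
      exact le_of_mul_le_mul_left hst hh
    · calc |c + d| ≤ |c| + |d| := abs_add_le _ _
        _ ≤ y0 + d := by rw [abs_of_pos hd, hy0def]; linarith
    · have : |c + d - c| = d := by rw [show c + d - c = d by ring, abs_of_pos hd]
      rw [this]; linarith
  -- mixed bound
  have hmix : ∀ h : ℝ, 0 < h → h ≤ r → |D h - D (-h)| ≤ 2*(G (2*h) - G h) := by
    intro h hh hhr
    have hst := aux_star hn hc (u := c + h) (v := c - h) (x := y0 + 2*h) (y := y0)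
        (t := (1:ℝ)/2) hy0 ?_ ?_ ?_ (hxa (by linarith)) (by norm_num) (by norm_num)
    · have harg1 : (1/2 : ℝ) * (c + h) + (1 - 1/2) * (c - h) = c := by ring
      have harg2 : (1/2 : ℝ) * (y0 + 2*h) + (1 - 1/2) * y0 = y0 + h := by ring
      rw [harg1, harg2] at hst
      have hne : h ≠ 0 := ne_of_gt hh
      have hee1 : (1/2:ℝ) * f (c + h) + (1 - 1/2) * f (c - h) - f c
          = (h/2) * (D h - D (-h)) := by
        rw [hDdef]
        simp only
        rw [show c + -h = c - h by ring, div_neg]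
        field_simp
        ring
      have hee2 : (1/2:ℝ) * f (y0 + 2*h) + (1 - 1/2) * f y0 - f (y0 + h)
          = (h/2) * (2*(G (2*h) - G h)) := by
        rw [hGdef]
        simp only
        field_simp
        ring
      rw [hee1, hee2, abs_mul, abs_of_pos (by positivity : (0:ℝ) < h/2)] at hst
      exact le_of_mul_le_mul_left hst (by positivity)
    · calc |c - h| ≤ |c| + |h| := abs_sub _ _
        _ ≤ y0 := by rw [abs_of_pos hh, hy0def]; linarith
    · calc |c + h| ≤ |c| + |h| := abs_add_le _ _
        _ ≤ y0 + 2*h := by rw [abs_of_pos hh, hy0def]; linarith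
    · have : |c + h - (c - h)| = 2*h := by
        rw [show c + h - (c - h) = 2*h by ring, abs_of_pos (by linarith : (0:ℝ) < 2*h)]
      rw [this]; linarith
  -- limits
  have hIoo : (Ioo (0:ℝ) (2*r)).Nonempty := ⟨r, hr, by linarith⟩
  have hGbddB : BddBelow (G '' Ioo 0 (2*r)) := by
    refine ⟨m0, ?_⟩
    rintro _ ⟨s, hs, rfl⟩
    exact hGbdd s hs
  have hGtend : Tendsto G (𝓝[>] 0) (𝓝 (sInf (G '' Ioo 0 (2*r)))) :=
    MonotoneOn.tendsto_nhdsWithin_Ioo_right hIoo hGmono hGbddB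
  set LG : ℝ := sInf (G '' Ioo 0 (2*r)) with hLGdef
  set H : ℝ → ℝ := fun h => D h + G h with hHdef
  have hrIoo : r ∈ Ioo (0:ℝ) (2*r) := ⟨hr, by linarith⟩
  have hHmono : MonotoneOn H (Ioo 0 (2*r)) := by
    intro h1 hh1 h2 hh2 h12
    have := hQd h1 h2 hh1.1 h12 hh2.2.le
    have := abs_le.mp this
    show D h1 + G h1 ≤ D h2 + G h2
    linarith [this.1, this.2]
  have hHbdd : BddBelow (H '' Ioo 0 (2*r)) := by
    refine ⟨D r - G r + 2*m0, ?_⟩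
    rintro _ ⟨h, hh, rfl⟩
    rcases le_total h r with hle | hge
    · have h1 := (abs_le.mp (hQd h r hh.1 hle (by linarith))).1
      have h2 := hGbdd h hh
      show D r - G r + 2*m0 ≤ D h + G h
      linarith
    · have h3 := hHmono hrIoo hh hge
      have h4 := hGbdd r hrIoo
      have : D r + G r ≥ D r - G r + 2*m0 := by linarith
      calc D r - G r + 2*m0 ≤ D r + G r := this
        _ ≤ H h := h3
  have hHtend : Tendsto H (𝓝[>] 0) (𝓝 (sInf (H '' Ioo 0 (2*r)))) :=
    MonotoneOn.tendsto_nhdsWithin_Ioo_right hIoo hHmono hHbdd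
  set LH : ℝ := sInf (H '' Ioo 0 (2*r)) with hLHdef
  set LD : ℝ := LH - LG with hLDdef
  have hDright : Tendsto D (𝓝[>] 0) (𝓝 LD) := by
    have : ∀ h : ℝ, D h = H h - G h := fun h => by rw [hHdef]; ring
    exact Filter.Tendsto.congr (fun h => (this h).symm) (hHtend.sub hGtend)
  -- left limit equals right limit
  have hG2tend : Tendsto (fun h : ℝ => G (2*h)) (𝓝[>] 0) (𝓝 LG) := by
    refine hGtend.comp ?_
    refine tendsto_nhdsWithin_of_tendsto_nhds_of_eventually_within _ ?_ ?_
    · have : Tendsto (fun h : ℝ => 2*h) (𝓝 0) (𝓝 0) := by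
        exact (continuous_const.mul continuous_id).tendsto' (0:ℝ) 0 (by simp)
      exact this.mono_left nhdsWithin_le_nhds
    · filter_upwards [self_mem_nhdsWithin] with h hh
      exact mul_pos two_pos (mem_Ioi.mp hh)
  have habsD : Tendsto (fun h : ℝ => |D h - LD|) (𝓝[>] 0) (𝓝 0) := by
    have h1 : Tendsto (fun h : ℝ => D h - LD) (𝓝[>] 0) (𝓝 0) :=
      tendsto_sub_nhds_zero_iff.mpr hDright
    exact (tendsto_zero_iff_abs_tendsto_zero _).mp h1
  have hDnegtend : Tendsto (fun h : ℝ => D (-h)) (𝓝[>] 0) (𝓝 LD) := by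
    rw [← tendsto_sub_nhds_zero_iff]
    rw [tendsto_zero_iff_abs_tendsto_zero]
    refine squeeze_zero' (Eventually.of_forall (fun h => abs_nonneg _)) ?_ ?_
      (g := fun h => 2*(G (2*h) - G h) + |D h - LD|)
    · filter_upwards [Ioo_mem_nhdsGT hr] with h hh
      calc |D (-h) - LD| ≤ |D (-h) - D h| + |D h - LD| := abs_sub_le _ _ _
        _ ≤ 2*(G (2*h) - G h) + |D h - LD| := by
            have := hmix h hh.1 hh.2.le
            rw [abs_sub_comm] at this
            linarith
    · have : Tendsto (fun h : ℝ => 2*(G (2*h) - G h) + |D h - LD|) (𝓝[>] 0)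
          (𝓝 (2*(LG - LG) + 0)) := (((hG2tend.sub hGtend).const_mul 2).add habsD)
      simpa using this
  have hneg : Tendsto (fun x : ℝ => -x) (𝓝[<] (0:ℝ)) (𝓝[>] (0:ℝ)) := by
    refine tendsto_nhdsWithin_of_tendsto_nhds_of_eventually_within _ ?_ ?_
    · simpa using continuous_neg.tendsto (0:ℝ) |>.mono_left (nhdsWithin_le_nhds)
    · filter_upwards [self_mem_nhdsWithin] with x hx
      exact neg_pos.mpr (mem_Iio.mp hx)
  have hDleft : Tendsto D (𝓝[<] 0) (𝓝 LD) := by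
    have := hDnegtend.comp hneg
    refine this.congr (fun x => ?_)
    simp
  have hDboth : Tendsto D (𝓝[≠] (0:ℝ)) (𝓝 LD) := by
    rw [← nhdsLT_sup_nhdsGT (0:ℝ)]
    exact tendsto_sup.mpr ⟨hDleft, hDright⟩
  refine ⟨LD, hasDerivAt_iff_tendsto_slope_zero.mpr ?_⟩
  refine hDboth.congr (fun h => ?_)
  rw [hDdef]
  simp only [smul_eq_mul]
  rw [inv_mul_eq_div]

-- Section 5: forward direction, S-monotonicity of the derivative

lemma aux_tendsto_right {f : ℝ → ℝ} {x L : ℝ} (hf : HasDerivAt f L x) :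
    Tendsto (fun δ : ℝ => (f (x + δ) - f x) / δ) (𝓝[>] 0) (𝓝 L) := by
  refine hf.tendsto_slope_zero_right.congr (fun δ => ?_)
  rw [smul_eq_mul, inv_mul_eq_div]

lemma aux_neg_tendsto : Tendsto (fun δ : ℝ => -δ) (𝓝[>] (0:ℝ)) (𝓝[<] (0:ℝ)) := by
  refine tendsto_nhdsWithin_of_tendsto_nhds_of_eventually_within _ ?_ ?_
  · simpa using (continuous_neg.tendsto (0:ℝ)).mono_left (nhdsWithin_le_nhds)
  · filter_upwards [self_mem_nhdsWithin] with x hx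
    exact neg_neg_iff_pos.mpr (mem_Ioi.mp hx)

lemma aux_tendsto_left {f : ℝ → ℝ} {y L : ℝ} (hf : HasDerivAt f L y) :
    Tendsto (fun δ : ℝ => (f y - f (y - δ)) / δ) (𝓝[>] 0) (𝓝 L) := by
  have h2 := hf.tendsto_slope_zero_left.comp aux_neg_tendsto
  refine h2.congr (fun δ => ?_)
  show (-δ)⁻¹ • (f (y + -δ) - f y) = _
  rw [smul_eq_mul, show y + -δ = y - δ from by ring, inv_neg]
  ring

lemma aux_quad_expand {n : ℕ} (M : Matrix (Fin n) (Fin n) ℝ) (v : Fin n → ℝ) :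
    v ⬝ᵥ (M *ᵥ v) = ∑ i, ∑ j, M i j * (v i * v j) := by
  simp only [dotProduct, mulVec]
  refine Finset.sum_congr rfl (fun i _ => ?_)
  rw [Finset.mul_sum]
  exact Finset.sum_congr rfl (fun j _ => by ring)

lemma aux_quad_lin {n : ℕ} (P Q R : Matrix (Fin n) (Fin n) ℝ) (s t : ℝ) (w : Fin n → ℝ) :
    w ⬝ᵥ ((s • P + t • Q - R) *ᵥ w)
      = s * (w ⬝ᵥ (P *ᵥ w)) + t * (w ⬝ᵥ (Q *ᵥ w)) - w ⬝ᵥ (R *ᵥ w) := by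
  rw [sub_mulVec, add_mulVec, smul_mulVec, smul_mulVec, dotProduct_sub,
    dotProduct_add, dotProduct_smul, dotProduct_smul]
  simp [smul_eq_mul]

lemma aux_const_psd {n : ℕ} {h : ℝ} (hh : 0 ≤ h) :
    (Matrix.of (fun _ _ => h) : Matrix (Fin n) (Fin n) ℝ).PosSemidef := by
  refine aux_posSemidef_of_quad (by ext i j; simp) (fun v => ?_)
  have hrw : (Matrix.of (fun _ _ => h) : Matrix (Fin n) (Fin n) ℝ)
      = h • vecMulVec (fun _ => 1) (fun _ => 1) := by
    ext i j; simp [vecMulVec_apply]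
  rw [hrw, smul_mulVec, dotProduct_smul, aux_vecMulVec_mulVec, dotProduct_smul,
    smul_eq_mul, smul_eq_mul]
  rw [dotProduct_comm]
  exact mul_nonneg hh (mul_self_nonneg _)

lemma aux_J_step {a : EReal} {n : ℕ} {f : ℝ → ℝ} (hc : SConv a f n)
    (hdiff : ∀ x, MemI a x → DifferentiableAt ℝ f x)
    {C : Matrix (Fin n) (Fin n) ℝ} (hCs : C.IsSymm) (hCpsd : C.PosSemidef)
    {h : ℝ} (hh : 0 < h)
    (hCe : ∀ (i j : Fin n) (t : ℝ), 0 ≤ t → t ≤ h → MemI a (C i j + t)) :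
    (Matrix.of fun i j => deriv f (C i j + h) - deriv f (C i j)).PosSemidef := by
  have hsymm : ∀ i j, C j i = C i j := fun i j => congrFun (congrFun hCs i) j
  refine aux_posSemidef_of_quad ?_ (fun w => ?_)
  · ext i j
    simp only [transpose_apply, of_apply]
    rw [hsymm i j]
  set ψ : ℝ → ℝ := fun t => ∑ i, ∑ j, f (C i j + t) * (w i * w j) with hψ
  have happ : ∀ t : ℝ, 0 ≤ t → t ≤ h → ψ t ≤ (t/h) * ψ h + (1 - t/h) * ψ 0 := by
    intro t ht0 hth
    set X : Matrix (Fin n) (Fin n) ℝ := Matrix.of fun i j => C i j + h with hX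
    have hXs : X.IsSymm := by
      ext i j
      simp only [transpose_apply, of_apply, hX]
      rw [hsymm i j]
    have hXe : EntriesIn a X := fun i j => by
      simpa [hX] using hCe i j h hh.le le_rfl
    have hCe0 : EntriesIn a C := fun i j => by
      simpa using hCe i j 0 le_rfl hh.le
    have hXC : (X - C).PosSemidef := by
      have hrw : X - C = Matrix.of fun _ _ => h := by
        ext i j; simp [hX]
      rw [hrw]
      exact aux_const_psd hh.le
    have key := hc X C hXs hCs hXe hCe0 hCpsd hXC (t/h) (by positivity)
      (div_le_one_of_le₀ hth hh.le)
    have hq := aux_quad_nonneg key w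
    rw [aux_quad_lin] at hq
    have e1 : w ⬝ᵥ ((X.map f) *ᵥ w) = ψ h := by
      rw [aux_quad_expand, hψ]
      exact Finset.sum_congr rfl fun i _ => Finset.sum_congr rfl fun j _ => by
        simp [hX, Matrix.map_apply]
    have e2 : w ⬝ᵥ ((C.map f) *ᵥ w) = ψ 0 := by
      rw [aux_quad_expand, hψ]
      exact Finset.sum_congr rfl fun i _ => Finset.sum_congr rfl fun j _ => by
        simp [Matrix.map_apply]
    have e3 : w ⬝ᵥ ((((t/h) • X + (1 - t/h) • C).map f) *ᵥ w) = ψ t := by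
      rw [aux_quad_expand, hψ]
      refine Finset.sum_congr rfl fun i _ => Finset.sum_congr rfl fun j _ => ?_
      have harg : ((t/h) • X + (1 - t/h) • C) i j = C i j + t := by
        simp only [Matrix.add_apply, Matrix.smul_apply, smul_eq_mul, hX, of_apply]
        field_simp
        ring
      rw [Matrix.map_apply, harg]
    rw [e1, e2, e3] at hq
    linarith
  have hsuper : ∀ δ, 0 ≤ δ → δ ≤ h → ψ δ + ψ (h - δ) ≤ ψ h + ψ 0 := by
    intro δ hδ0 hδh
    have h1 := happ δ hδ0 hδh
    have h2 := happ (h - δ) (by linarith) (by linarith)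
    have he : (h - δ)/h = 1 - δ/h := by
      field_simp
    rw [he] at h2
    linarith
  rw [aux_quad_expand]
  simp only [of_apply]
  have htt : Tendsto (fun δ : ℝ => ∑ i, ∑ j,
      ((f (C i j + h) - f (C i j + h - δ))/δ - (f (C i j + δ) - f (C i j))/δ) * (w i * w j))
      (𝓝[>] 0) (𝓝 (∑ i, ∑ j, (deriv f (C i j + h) - deriv f (C i j)) * (w i * w j))) := by
    refine tendsto_finset_sum _ fun i _ => tendsto_finset_sum _ fun j _ => ?_
    have hd1 := aux_tendsto_left ((hdiff _ (hCe i j h hh.le le_rfl)).hasDerivAt)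
    have hd2 : Tendsto (fun δ : ℝ => (f (C i j + δ) - f (C i j))/δ) (𝓝[>] 0)
        (𝓝 (deriv f (C i j))) := by
      have := aux_tendsto_right ((hdiff _ (by simpa using hCe i j 0 le_rfl hh.le)).hasDerivAt)
      exact this
    exact (hd1.sub hd2).mul_const _
  refine ge_of_tendsto htt ?_
  filter_upwards [Ioo_mem_nhdsGT hh] with δ hδ
  have hs := hsuper δ hδ.1.le hδ.2.le
  have hval : ∑ i, ∑ j,
      ((f (C i j + h) - f (C i j + h - δ))/δ - (f (C i j + δ) - f (C i j))/δ) * (w i * w j)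
      = ((ψ h + ψ 0) - (ψ δ + ψ (h - δ)))/δ := by
    have hδne : δ ≠ 0 := ne_of_gt hδ.1
    simp only [hψ, add_zero]
    rw [show (∑ i, ∑ j, f (C i j + h) * (w i * w j)) + (∑ i, ∑ j, f (C i j) * (w i * w j))
        - ((∑ i, ∑ j, f (C i j + δ) * (w i * w j)) + (∑ i, ∑ j, f (C i j + (h - δ)) * (w i * w j)))
        = ∑ i, ∑ j, ((f (C i j + h) + f (C i j)) - (f (C i j + δ) + f (C i j + (h-δ)))) * (w i * w j)
      from by rw [← Finset.sum_add_distrib, ← Finset.sum_add_distrib, ← Finset.sum_sub_distrib]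
              refine Finset.sum_congr rfl fun i _ => ?_
              rw [← Finset.sum_add_distrib, ← Finset.sum_add_distrib, ← Finset.sum_sub_distrib]
              exact Finset.sum_congr rfl fun j _ => by ring]
    rw [Finset.sum_div]
    refine Finset.sum_congr rfl fun i _ => ?_
    rw [Finset.sum_div]
    refine Finset.sum_congr rfl fun j _ => ?_
    rw [show C i j + h - δ = C i j + (h - δ) from by ring, div_sub_div_same,
      div_mul_eq_mul_div]
    congr 1
    ring
  rw [hval]
  exact div_nonneg (by linarith) hδ.1.le

lemma aux_forward_smono {a : EReal} {n : ℕ} {f : ℝ → ℝ} (hn : 2 ≤ n) (hc : SConv a f n)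
    (hdiff : ∀ x, MemI a x → DifferentiableAt ℝ f x) : SMono a (deriv f) n := by
  intro A B hAs hBs hAe hBe hBpsd hABpsd
  have hAsymm : ∀ i j, A j i = A i j := fun i j => congrFun (congrFun hAs i) j
  have hBsymm : ∀ i j, B j i = B i j := fun i j => congrFun (congrFun hBs i) j
  refine aux_posSemidef_of_quad ?_ (fun v => ?_)
  · ext i j
    simp only [transpose_apply, Matrix.sub_apply, Matrix.map_apply]
    rw [hAsymm i j, hBsymm i j]
  -- bound on entries and the slack h0
  have hne : (Finset.univ : Finset (Fin n × Fin n)).Nonempty :=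
    ⟨(⟨0, by omega⟩, ⟨0, by omega⟩), Finset.mem_univ _⟩
  set M0 : ℝ := Finset.univ.sup' hne (fun p : Fin n × Fin n => max (A p.1 p.2) (B p.1 p.2))
    with hM0
  have hM0a : (M0 : EReal) < a := by
    obtain ⟨p, _, hp⟩ := Finset.exists_mem_eq_sup' hne
      (fun p : Fin n × Fin n => max (A p.1 p.2) (B p.1 p.2))
    rw [hM0, hp]
    rcases max_cases (A p.1 p.2) (B p.1 p.2) with ⟨he, _⟩ | ⟨he, _⟩ <;> rw [he]
    · exact (hAe p.1 p.2).2
    · exact (hBe p.1 p.2).2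
  have hMbound : ∀ i j, A i j ≤ M0 ∧ B i j ≤ M0 := by
    intro i j
    have hs : max (A i j) (B i j) ≤ M0 := by
      rw [hM0]
      exact Finset.le_sup' (fun p : Fin n × Fin n => max (A p.1 p.2) (B p.1 p.2))
        (Finset.mem_univ (i,j))
    exact ⟨le_trans (le_max_left _ _) hs, le_trans (le_max_right _ _) hs⟩
  obtain ⟨h0, hh0, hh0a⟩ := aux_exists_r hM0a
  -- the path of matrices
  set Cm : ℝ → Matrix (Fin n) (Fin n) ℝ :=
    fun s => Matrix.of fun i j => B i j + s * (A i j - B i j) with hCm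
  have hCm_symm : ∀ s, (Cm s).IsSymm := by
    intro s
    ext i j
    simp only [hCm, transpose_apply, of_apply]
    rw [hAsymm i j, hBsymm i j]
  have hCm_entry : ∀ s, ∀ i j, Cm s i j = s * A i j + (1 - s) * B i j := by
    intro s i j
    simp only [hCm, of_apply]
    ring
  have hCm_mem : ∀ s, s ∈ Icc (0:ℝ) 1 → ∀ i j, MemI a (Cm s i j) := by
    intro s hs i j
    rw [hCm_entry]
    exact aux_memI_combo (hAe i j) (hBe i j) hs.1 hs.2
  have hCm_psd : ∀ s, s ∈ Icc (0:ℝ) 1 → (Cm s).PosSemidef := by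
    intro s hs
    refine aux_posSemidef_of_quad (hCm_symm s) (fun w => ?_)
    have hrw : Cm s = B + s • (A - B) := by
      ext i j
      simp [hCm, Matrix.sub_apply]
    rw [hrw, add_mulVec, dotProduct_add, smul_mulVec, dotProduct_smul, smul_eq_mul]
    exact add_nonneg (aux_quad_nonneg hBpsd w)
      (mul_nonneg hs.1 (aux_quad_nonneg hABpsd w))
  have hCm_shift : ∀ s, s ∈ Icc (0:ℝ) 1 → ∀ i j, ∀ t : ℝ, 0 ≤ t → t ≤ h0 →
      MemI a (Cm s i j + t) := by
    intro s hs i j t ht0 hth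
    constructor
    · refine lt_of_lt_of_le (hCm_mem s hs i j).1 (EReal.coe_le_coe_iff.mpr (by linarith))
    · refine lt_of_le_of_lt (EReal.coe_le_coe_iff.mpr ?_) hh0a
      have h1 := (hMbound i j).1
      have h2 := (hMbound i j).2
      rw [hCm_entry]
      nlinarith [hs.1, hs.2]
  -- main limit argument
  rw [aux_quad_expand]
  simp only [Matrix.sub_apply, Matrix.map_apply]
  have htt : Tendsto (fun h : ℝ => ∑ i, ∑ j,
      ((f (A i j + h) - f (A i j))/h - (f (B i j + h) - f (B i j))/h) * (v i * v j))
      (𝓝[>] 0) (𝓝 (∑ i, ∑ j, (deriv f (A i j) - deriv f (B i j)) * (v i * v j))) := by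
    refine tendsto_finset_sum _ fun i _ => tendsto_finset_sum _ fun j _ => ?_
    exact ((aux_tendsto_right (hdiff _ (hAe i j)).hasDerivAt).sub
      (aux_tendsto_right (hdiff _ (hBe i j)).hasDerivAt)).mul_const _
  refine ge_of_tendsto htt ?_
  filter_upwards [Ioo_mem_nhdsGT hh0] with h hhI
  set Ψ : ℝ → ℝ := fun s => ∑ i, ∑ j,
    (f (B i j + s * (A i j - B i j) + h) - f (B i j + s * (A i j - B i j))) * (v i * v j)
    with hΨ
  have hΨd : ∀ s, s ∈ Icc (0:ℝ) 1 → HasDerivAt Ψ (∑ i, ∑ j,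
      ((deriv f (Cm s i j + h) - deriv f (Cm s i j)) * (A i j - B i j)) * (v i * v j)) s := by
    intro s hs
    rw [hΨ]
    refine HasDerivAt.fun_sum (fun i _ => ?_)
    have : ∀ i : Fin n, ∑ j, ((deriv f (Cm s i j + h) - deriv f (Cm s i j)) * (A i j - B i j))
        * (v i * v j) = ∑ j, ((deriv f (Cm s i j + h) - deriv f (Cm s i j)) * (A i j - B i j))
        * (v i * v j) := fun _ => rfl
    refine HasDerivAt.fun_sum (fun j _ => ?_)
    have hinner : HasDerivAt (fun s : ℝ => B i j + s * (A i j - B i j)) (A i j - B i j) s :=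
      (hasDerivAt_mul_const (A i j - B i j)).const_add (B i j)
    have houter1 := (hdiff _ (hCm_shift s hs i j h hhI.1.le hhI.2.le)).hasDerivAt
    have houter2 := (hdiff _ (hCm_mem s hs i j)).hasDerivAt
    have h1 : HasDerivAt (fun u : ℝ => f (B i j + u * (A i j - B i j) + h))
        (deriv f (Cm s i j + h) * (A i j - B i j)) s := by
      have hinner' : HasDerivAt (fun u : ℝ => B i j + u * (A i j - B i j) + h)
          (A i j - B i j) s := hinner.add_const h
      exact HasDerivAt.comp s houter1 hinner'
    have h2 : HasDerivAt (fun u : ℝ => f (B i j + u * (A i j - B i j)))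
        (deriv f (Cm s i j) * (A i j - B i j)) s :=
      HasDerivAt.comp s houter2 hinner
    have h3 := (h1.sub h2).mul_const (v i * v j)
    have heq : (deriv f (Cm s i j + h) * (A i j - B i j)
        - deriv f (Cm s i j) * (A i j - B i j)) * (v i * v j)
        = ((deriv f (Cm s i j + h) - deriv f (Cm s i j)) * (A i j - B i j)) * (v i * v j) := by
      ring
    rw [heq] at h3
    exact h3
  have hΨmono : MonotoneOn Ψ (Icc 0 1) := by
    refine monotoneOn_of_deriv_nonneg (convex_Icc 0 1) ?_ ?_ ?_
    · intro s hs
      exact (hΨd s hs).continuousAt.continuousWithinAt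
    · intro s hs
      rw [interior_Icc] at hs
      exact ((hΨd s (Ioo_subset_Icc_self hs)).differentiableAt).differentiableWithinAt
    · intro s hs
      rw [interior_Icc] at hs
      have hs' : s ∈ Icc (0:ℝ) 1 := Ioo_subset_Icc_self hs
      rw [(hΨd s hs').deriv]
      -- Schur product positivity
      have hΔ := aux_J_step hc hdiff (hCm_symm s) (hCm_psd s hs') hhI.1
        (fun i j t ht0 hth => hCm_shift s hs' i j t ht0 (hth.trans hhI.2.le))
      have hSchur := aux_schur hΔ hABpsd
      have hq := aux_quad_nonneg hSchur v
      rw [aux_quad_expand] at hq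
      simp only [of_apply, Matrix.sub_apply] at hq
      exact hq
  have h10 := hΨmono (left_mem_Icc.mpr zero_le_one) (right_mem_Icc.mpr zero_le_one) zero_le_one
  have hval : ∑ i, ∑ j,
      ((f (A i j + h) - f (A i j))/h - (f (B i j + h) - f (B i j))/h) * (v i * v j)
      = (Ψ 1 - Ψ 0)/h := by
    simp only [hΨ, one_mul, zero_mul, add_zero]
    simp only [show ∀ i j : Fin n, B i j + (A i j - B i j) = A i j from fun i j => by ring]
    rw [← Finset.sum_sub_distrib, Finset.sum_div]
    refine Finset.sum_congr rfl fun i _ => ?_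
    rw [← Finset.sum_sub_distrib, Finset.sum_div]
    refine Finset.sum_congr rfl fun j _ => ?_
    rw [div_sub_div_same, div_mul_eq_mul_div]
    congr 1
    ring
  rw [hval]
  exact div_nonneg (by linarith) hhI.1.le

-- Section 6: reverse direction

lemma aux_reverse {a : EReal} {n : ℕ} {f : ℝ → ℝ}
    (hdiff : ∀ x, MemI a x → DifferentiableAt ℝ f x) (hm : SMono a (deriv f) n) :
    SConv a f n := by
  intro A B hAs hBs hAe hBe hBpsd hABpsd t ht0 ht1
  have hAsymm : ∀ i j, A j i = A i j := fun i j => congrFun (congrFun hAs i) j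
  have hBsymm : ∀ i j, B j i = B i j := fun i j => congrFun (congrFun hBs i) j
  refine aux_posSemidef_of_quad ?_ (fun v => ?_)
  · ext i j
    simp only [transpose_apply, Matrix.add_apply, Matrix.sub_apply, Matrix.smul_apply,
      Matrix.map_apply, smul_eq_mul]
    rw [hAsymm i j, hBsymm i j]
  set Cm : ℝ → Matrix (Fin n) (Fin n) ℝ :=
    fun s => Matrix.of fun i j => B i j + s * (A i j - B i j) with hCm
  have hCm_symm : ∀ s, (Cm s).IsSymm := by
    intro s
    ext i j
    simp only [hCm, transpose_apply, of_apply]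
    rw [hAsymm i j, hBsymm i j]
  have hCm_entry : ∀ s, ∀ i j, Cm s i j = s * A i j + (1 - s) * B i j := by
    intro s i j
    simp only [hCm, of_apply]
    ring
  have hCm_mem : ∀ s, s ∈ Icc (0:ℝ) 1 → ∀ i j, MemI a (Cm s i j) := by
    intro s hs i j
    rw [hCm_entry]
    exact aux_memI_combo (hAe i j) (hBe i j) hs.1 hs.2
  have hCm_psd : ∀ s, s ∈ Icc (0:ℝ) 1 → (Cm s).PosSemidef := by
    intro s hs
    refine aux_posSemidef_of_quad (hCm_symm s) (fun w => ?_)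
    have hrw : Cm s = B + s • (A - B) := by
      ext i j
      simp [hCm, Matrix.sub_apply]
    rw [hrw, add_mulVec, dotProduct_add, smul_mulVec, dotProduct_smul, smul_eq_mul]
    exact add_nonneg (aux_quad_nonneg hBpsd w) (mul_nonneg hs.1 (aux_quad_nonneg hABpsd w))
  set φ : ℝ → ℝ := fun s => ∑ i, ∑ j, f (B i j + s * (A i j - B i j)) * (v i * v j) with hφ
  have hφd : ∀ s, s ∈ Icc (0:ℝ) 1 → HasDerivAt φ
      (∑ i, ∑ j, (deriv f (Cm s i j) * (A i j - B i j)) * (v i * v j)) s := by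
    intro s hs
    rw [hφ]
    refine HasDerivAt.fun_sum (fun i _ => HasDerivAt.fun_sum (fun j _ => ?_))
    have hinner : HasDerivAt (fun u : ℝ => B i j + u * (A i j - B i j)) (A i j - B i j) s :=
      (hasDerivAt_mul_const (A i j - B i j)).const_add (B i j)
    have houter := (hdiff _ (hCm_mem s hs i j)).hasDerivAt
    exact (HasDerivAt.comp s houter hinner).mul_const (v i * v j)
  have hconv : ConvexOn ℝ (Icc (0:ℝ) 1) φ := by
    refine MonotoneOn.convexOn_of_deriv (convex_Icc 0 1) ?_ ?_ ?_
    · intro s hs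
      exact (hφd s hs).continuousAt.continuousWithinAt
    · intro s hs
      rw [interior_Icc] at hs
      exact ((hφd s (Ioo_subset_Icc_self hs)).differentiableAt).differentiableWithinAt
    · rw [interior_Icc]
      intro s1 hs1 s2 hs2 h12
      have hs1' : s1 ∈ Icc (0:ℝ) 1 := Ioo_subset_Icc_self hs1
      have hs2' : s2 ∈ Icc (0:ℝ) 1 := Ioo_subset_Icc_self hs2
      rw [(hφd s1 hs1').deriv, (hφd s2 hs2').deriv]
      -- monotonicity of the derivative via SMono and Schur
      have hsubpsd : (Cm s2 - Cm s1).PosSemidef := by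
        refine aux_posSemidef_of_quad ?_ (fun w => ?_)
        · ext i j
          simp only [transpose_apply, Matrix.sub_apply, hCm, of_apply]
          rw [hAsymm i j, hBsymm i j]
        · have hrw : Cm s2 - Cm s1 = (s2 - s1) • (A - B) := by
            ext i j
            simp only [Matrix.sub_apply, hCm, of_apply, Matrix.smul_apply, smul_eq_mul]
            ring
          rw [hrw, smul_mulVec, dotProduct_smul, smul_eq_mul]
          exact mul_nonneg (by linarith) (aux_quad_nonneg hABpsd w)
      have hΔ := hm (Cm s2) (Cm s1) (hCm_symm s2) (hCm_symm s1)
        (hCm_mem s2 hs2') (hCm_mem s1 hs1') (hCm_psd s1 hs1') hsubpsd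
      have hSchur := aux_schur hΔ hABpsd
      have hq := aux_quad_nonneg hSchur v
      rw [aux_quad_expand] at hq
      simp only [of_apply, Matrix.sub_apply, Matrix.map_apply] at hq
      have hdiffsum : ∑ i, ∑ j, (deriv f (Cm s2 i j) * (A i j - B i j)) * (v i * v j)
          - ∑ i, ∑ j, (deriv f (Cm s1 i j) * (A i j - B i j)) * (v i * v j)
          = ∑ i, ∑ j, (deriv f (Cm s2 i j) - deriv f (Cm s1 i j)) * (A i j - B i j)
            * (v i * v j) := by
        rw [← Finset.sum_sub_distrib]
        refine Finset.sum_congr rfl fun i _ => ?_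
        rw [← Finset.sum_sub_distrib]
        exact Finset.sum_congr rfl fun j _ => by ring
      have : 0 ≤ ∑ i, ∑ j, (deriv f (Cm s2 i j) * (A i j - B i j)) * (v i * v j)
          - ∑ i, ∑ j, (deriv f (Cm s1 i j) * (A i j - B i j)) * (v i * v j) := by
        rw [hdiffsum]
        exact hq
      linarith
  have hkey := hconv.2 (right_mem_Icc.mpr zero_le_one) (left_mem_Icc.mpr zero_le_one)
    ht0 (by linarith : 0 ≤ 1 - t) (by ring : t + (1 - t) = 1)
  have harg : t • (1:ℝ) + (1 - t) • (0:ℝ) = t := by simp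
  rw [harg] at hkey
  rw [aux_quad_lin]
  have e1 : v ⬝ᵥ ((A.map f) *ᵥ v) = φ 1 := by
    rw [aux_quad_expand, hφ]
    refine Finset.sum_congr rfl fun i _ => Finset.sum_congr rfl fun j _ => ?_
    rw [Matrix.map_apply, show B i j + 1 * (A i j - B i j) = A i j from by ring]
  have e2 : v ⬝ᵥ ((B.map f) *ᵥ v) = φ 0 := by
    rw [aux_quad_expand, hφ]
    refine Finset.sum_congr rfl fun i _ => Finset.sum_congr rfl fun j _ => ?_
    rw [Matrix.map_apply, show B i j + 0 * (A i j - B i j) = B i j from by ring]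
  have e3 : v ⬝ᵥ (((t • A + (1 - t) • B).map f) *ᵥ v) = φ t := by
    rw [aux_quad_expand, hφ]
    refine Finset.sum_congr rfl fun i _ => Finset.sum_congr rfl fun j _ => ?_
    rw [Matrix.map_apply, Matrix.add_apply, Matrix.smul_apply, Matrix.smul_apply,
      smul_eq_mul, smul_eq_mul, show t * A i j + (1 - t) * B i j
        = B i j + t * (A i j - B i j) from by ring]
  rw [e1, e2, e3]
  simp only [smul_eq_mul] at hkey
  linarith


/-- Theorem 3.2 (1): for `n ≥ 2`, `f` is S-convex of order `n` on `(-α, α)` iff `f` is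
differentiable on `(-α, α)` and `f'` is S-monotone of order `n`. -/
theorem stmt_8 (a : EReal) (ha : 0 < a) (n : ℕ) (hn : 2 ≤ n) (f : ℝ → ℝ) :
    SConv a f n ↔
      ((∀ x, MemI a x → DifferentiableAt ℝ f x) ∧ SMono a (deriv f) n) := by
  constructor
  · intro hc
    have hdiff : ∀ x, MemI a x → DifferentiableAt ℝ f x := by
      intro x hx
      obtain ⟨L, hL⟩ := aux_hasDeriv hn hc hx
      exact hL.differentiableAt
    exact ⟨hdiff, aux_forward_smono hn hc hdiff⟩
  · rintro ⟨hdiff, hm⟩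
    exact aux_reverse hdiff hm
end
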